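/- arXiv:2604.11345 — 6 statements merged into one kernel-verified Lean document; each statement's English description precedes it below -/
import Mathlib

section
/- Under the unknown-input Weierstrass decomposition, unknown-input historical data, and unknown-input persistent excitation hypotheses, the following three statements are equivalent: (a) there exist matrices A_O ∈ ℝ^{n×n}, B_O^u ∈ ℝ^{n×m}, B_O^y ∈ ℝ^{n×p}, N_O ∈ ℝ^{n×p} such that every trajectory (u, x, y) of the unknown-input descriptor system satisfies x(k+1) = A_O·x(k) + B_O^u·u(k) + B_O^y·y(k) + N_O·y(k+1) for all k ∈ ℕ; (b) every g ∈ ℝ^T with X_p·g = 0, U_p·g = 0, Y_p·g = 0 and Y_f·g = 0 satisfies X_f·g = 0; (c) there exist matrices Σ_{X_p} ∈ ℝ^{n×n}, Σ_{U_p} ∈ ℝ^{n×m}, Σ_{Y_p} ∈ ℝ^{n×p}, Σ_{Y_f} ∈ ℝ^{n×p} with X_f = Σ_{X_p}·X_p + Σ_{U_p}·U_p + Σ_{Y_p}·Y_p + Σ_{Y_f}·Y_f. -/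
open Matrix

noncomputable section

/-- Data matrix of depth `T` whose `k`-th column is `f (k + off)`. -/
def histMat {ι : Type} (T : ℕ) (f : ℕ → ι → ℝ) (off : ℕ) : Matrix ι (Fin T) ℝ :=
  Matrix.of fun i k => f ((k : ℕ) + off) i

/-- A real square matrix is Schur stable if every complex eigenvalue has modulus `< 1`. -/
def SchurStable {n : ℕ} (M : Matrix (Fin n) (Fin n) ℝ) : Prop :=
  ∀ μ ∈ spectrum ℂ (M.map (fun r : ℝ => (r : ℂ))), ‖μ‖ < 1

/-- View a real matrix as a complex matrix. -/
def cmap {a b : Type} (M : Matrix a b ℝ) : Matrix a b ℂ := M.map (fun r => (r : ℂ))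

lemma mulVec_sumF {a b ι : Type*} [Fintype b] (M : Matrix a b ℝ) (t : Finset ι)
    (f : ι → b → ℝ) : M *ᵥ (∑ j ∈ t, f j) = ∑ j ∈ t, M *ᵥ f j :=
  map_sum M.mulVecLin f t

lemma mulVec_sum_smul {a b ι : Type*} [Fintype b] (M : Matrix a b ℝ) (t : Finset ι)
    (c : ι → ℝ) (v : ι → b → ℝ) :
    M *ᵥ (∑ k ∈ t, c k • v k) = ∑ k ∈ t, c k • (M *ᵥ v k) := by
  rw [mulVec_sumF]
  exact Finset.sum_congr rfl fun k _ => M.mulVecLin.map_smul (c k) (v k)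

lemma fast_formula {n2 s : ℕ} (R : Matrix (Fin n2) (Fin n2) ℝ) (hR : R ^ s = 0)
    (z2 v : ℕ → Fin n2 → ℝ)
    (hrec : ∀ k, R *ᵥ z2 (k + 1) = z2 k + v k) (k : ℕ) :
    z2 k = -(∑ j ∈ Finset.range s, R ^ j *ᵥ v (k + j)) := by
  have main : ∀ t k, z2 k = R ^ t *ᵥ z2 (k + t) - ∑ j ∈ Finset.range t, R ^ j *ᵥ v (k + j) := by
    intro t
    induction t with
    | zero => intro k; simp
    | succ t ih =>
      intro k
      have h1 : z2 (k + t) = R *ᵥ z2 (k + t + 1) - v (k + t) := by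
        rw [hrec (k + t)]; abel
      calc z2 k = R ^ t *ᵥ z2 (k + t) - ∑ j ∈ Finset.range t, R ^ j *ᵥ v (k + j) := ih k
        _ = R ^ t *ᵥ (R *ᵥ z2 (k + t + 1) - v (k + t))
              - ∑ j ∈ Finset.range t, R ^ j *ᵥ v (k + j) := by rw [← h1]
        _ = R ^ (t + 1) *ᵥ z2 (k + (t + 1)) - ∑ j ∈ Finset.range (t + 1), R ^ j *ᵥ v (k + j) := by
            rw [mulVec_sub, mulVec_mulVec, ← pow_succ, Finset.sum_range_succ, sub_sub,
              add_comm (R ^ t *ᵥ v (k + t))]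
            rfl
  have h2 := main s k
  rw [hR, zero_mulVec, zero_sub] at h2
  exact h2

lemma fast_recur {n2 s : ℕ} (R : Matrix (Fin n2) (Fin n2) ℝ) (hs : 1 ≤ s) (hR : R ^ s = 0)
    (v : ℕ → Fin n2 → ℝ) (k : ℕ) :
    R *ᵥ (-(∑ j ∈ Finset.range s, R ^ j *ᵥ v (k + 1 + j)))
      = -(∑ j ∈ Finset.range s, R ^ j *ᵥ v (k + j)) + v k := by
  obtain ⟨s', rfl⟩ := Nat.exists_eq_succ_of_ne_zero (by omega : s ≠ 0)
  rw [mulVec_neg, mulVec_sumF]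
  have hL : ∑ j ∈ Finset.range (s' + 1), R *ᵥ (R ^ j *ᵥ v (k + 1 + j))
      = ∑ j ∈ Finset.range s', R ^ (j + 1) *ᵥ v (k + 1 + j) := by
    rw [Finset.sum_range_succ]
    have : R *ᵥ (R ^ s' *ᵥ v (k + 1 + s')) = R ^ (s' + 1) *ᵥ v (k + 1 + s') := by
      rw [mulVec_mulVec, ← pow_succ']
    rw [this, hR, zero_mulVec, add_zero]
    exact Finset.sum_congr rfl fun j _ => by rw [mulVec_mulVec, ← pow_succ']
  have hRt : ∑ j ∈ Finset.range (s' + 1), R ^ j *ᵥ v (k + j)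
      = (∑ j ∈ Finset.range s', R ^ (j + 1) *ᵥ v (k + 1 + j)) + v k := by
    rw [Finset.sum_range_succ']
    congr 1
    · exact Finset.sum_congr rfl fun j _ => by rw [show k + (j + 1) = k + 1 + j by omega]
    · simp
  rw [hL, hRt]
  abel

lemma sum_smul_fast {n2 T s : ℕ} (R : Matrix (Fin n2) (Fin n2) ℝ)
    (W : Fin T → ℕ → Fin n2 → ℝ) (V : ℕ → Fin n2 → ℝ) (g : Fin T → ℝ)
    (h : ∀ j < s, ∑ t : Fin T, g t • W t j = V j) :
    ∑ t : Fin T, g t • -(∑ j ∈ Finset.range s, R ^ j *ᵥ W t j)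
      = -(∑ j ∈ Finset.range s, R ^ j *ᵥ V j) := by
  have h1 : ∀ t : Fin T, g t • -(∑ j ∈ Finset.range s, R ^ j *ᵥ W t j)
      = -(∑ j ∈ Finset.range s, g t • (R ^ j *ᵥ W t j)) := by
    intro t; rw [smul_neg, Finset.smul_sum]
  simp only [h1]
  rw [Finset.sum_neg_distrib, neg_inj, Finset.sum_comm]
  refine Finset.sum_congr rfl fun j hj => ?_
  rw [← mulVec_sum_smul, h j (Finset.mem_range.mp hj)]




lemma exists_factor {V W U : Type*} [AddCommGroup V] [AddCommGroup W] [AddCommGroup U]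
    [Module ℝ V] [Module ℝ W] [Module ℝ U]
    (f : V →ₗ[ℝ] W) (g : V →ₗ[ℝ] U) (h : LinearMap.ker f ≤ LinearMap.ker g) :
    ∃ H : W →ₗ[ℝ] U, ∀ v, H (f v) = g v := by
  obtain ⟨Q, hQ⟩ := Submodule.exists_isCompl (LinearMap.range f)
  set π := Submodule.projectionOnto _ Q hQ with hπ
  obtain ⟨r, hr⟩ := f.rangeRestrict.exists_rightInverse_of_surjective
    (LinearMap.range_rangeRestrict f)
  refine ⟨g ∘ₗ r ∘ₗ π, fun v => ?_⟩
  have h1 : π (f v) = f.rangeRestrict v := by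
    have : f v = ((f.rangeRestrict v : LinearMap.range f) : W) := rfl
    rw [hπ, this, Submodule.linearProjOfIsCompl_apply_left hQ]
  have h2 : f (r (f.rangeRestrict v)) = f v := by
    have := congrArg Subtype.val (LinearMap.congr_fun hr (f.rangeRestrict v))
    simpa using this
  have h3 : r (f.rangeRestrict v) - v ∈ LinearMap.ker f := by
    simp [LinearMap.mem_ker, map_sub, h2]
  have h4 := h h3
  rw [LinearMap.mem_ker, map_sub, sub_eq_zero] at h4
  simpa [h1] using h4

lemma exists_matrix_factor {a b : Type} [Fintype a] [DecidableEq a] [Fintype b] [DecidableEq b]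
    {T : ℕ} (M : Matrix a (Fin T) ℝ) (N : Matrix b (Fin T) ℝ)
    (h : ∀ g : Fin T → ℝ, M *ᵥ g = 0 → N *ᵥ g = 0) :
    ∃ H : Matrix b a ℝ, N = H * M := by
  obtain ⟨Hl, hHl⟩ := exists_factor M.mulVecLin N.mulVecLin (fun g hg => by
    simp only [LinearMap.mem_ker, mulVecLin_apply] at *
    exact h g hg)
  refine ⟨LinearMap.toMatrix' Hl, ?_⟩
  have hcomp : N.mulVecLin = Hl ∘ₗ M.mulVecLin :=
    LinearMap.ext fun g => (hHl g).symm
  have := congrArg LinearMap.toMatrix' hcomp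
  rw [← Matrix.toLin'_apply' , ← Matrix.toLin'_apply' , LinearMap.toMatrix'_toLin'] at this
  rw [this, LinearMap.toMatrix'_comp, LinearMap.toMatrix'_toLin']

lemma mul_fromRows' {a₁ a₂ b c : Type} [Fintype a₁] [Fintype a₂] [Fintype c]
    (H : Matrix b (a₁ ⊕ a₂) ℝ) (A : Matrix a₁ c ℝ) (B : Matrix a₂ c ℝ) :
    H * fromRows A B = H.submatrix id Sum.inl * A + H.submatrix id Sum.inr * B := by
  ext i j
  simp [Matrix.mul_apply, fromRows_apply_inl, fromRows_apply_inr, Fintype.sum_sum_type]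

lemma histMat_mulVec {ι : Type} [Fintype ι] (T : ℕ) (f : ℕ → ι → ℝ) (off : ℕ) (g : Fin T → ℝ) :
    histMat T f off *ᵥ g = ∑ k : Fin T, g k • f ((k : ℕ) + off) := by
  funext i
  simp [histMat, mulVec, dotProduct, mul_comm, Finset.sum_apply]




def elimv {n1 n2 : ℕ} (a : Fin n1 → ℝ) (b : Fin n2 → ℝ) : Fin (n1 + n2) → ℝ :=
  fun i => Sum.elim a b (finSumFinEquiv.symm i)

lemma elimv_eq_iff {n1 n2 : ℕ} (a a' : Fin n1 → ℝ) (b b' : Fin n2 → ℝ) :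
    elimv a b = elimv a' b' ↔ a = a' ∧ b = b' := by
  constructor
  · intro h
    constructor
    · funext i
      have := congrFun h (finSumFinEquiv (Sum.inl i))
      simpa [elimv] using this
    · funext i
      have := congrFun h (finSumFinEquiv (Sum.inr i))
      simpa [elimv] using this
  · rintro ⟨rfl, rfl⟩; rfl

lemma elimv_add {n1 n2 : ℕ} (a a' : Fin n1 → ℝ) (b b' : Fin n2 → ℝ) :
    elimv a b + elimv a' b' = elimv (a + a') (b + b') := by
  funext i
  rcases h : finSumFinEquiv.symm i with x | x <;> simp [elimv, h]

lemma elimv_smul {n1 n2 : ℕ} (c : ℝ) (a : Fin n1 → ℝ) (b : Fin n2 → ℝ) :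
    c • elimv a b = elimv (c • a) (c • b) := by
  funext i
  rcases h : finSumFinEquiv.symm i with x | x <;> simp [elimv, h]

lemma sum_elimv {n1 n2 : ℕ} {ι : Type*} (t : Finset ι) (f : ι → Fin n1 → ℝ)
    (h : ι → Fin n2 → ℝ) :
    ∑ k ∈ t, elimv (f k) (h k) = elimv (∑ k ∈ t, f k) (∑ k ∈ t, h k) := by
  funext i
  rcases hh : finSumFinEquiv.symm i with x | x <;>
    simp [elimv, hh, Finset.sum_apply]

section key
variable {n1 n2 m q : ℕ}
  (E A : Matrix (Fin (n1 + n2)) (Fin (n1 + n2)) ℝ)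
  (B : Matrix (Fin (n1 + n2)) (Fin m) ℝ)
  (F : Matrix (Fin (n1 + n2)) (Fin q) ℝ)
  (S P : Matrix (Fin (n1 + n2)) (Fin (n1 + n2)) ℝ)
  (A1 : Matrix (Fin n1) (Fin n1) ℝ) (R : Matrix (Fin n2) (Fin n2) ℝ)
  (B1 : Matrix (Fin n1) (Fin m) ℝ) (B2 : Matrix (Fin n2) (Fin m) ℝ)
  (F1 : Matrix (Fin n1) (Fin q) ℝ) (F2 : Matrix (Fin n2) (Fin q) ℝ)

lemma unblock {M : Matrix (Fin (n1 + n2)) (Fin (n1 + n2)) ℝ}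
    {Mb : Matrix (Fin n1 ⊕ Fin n2) (Fin n1 ⊕ Fin n2) ℝ}
    (h : M.submatrix ⇑finSumFinEquiv ⇑finSumFinEquiv = Mb)
    (a : Fin n1 → ℝ) (b : Fin n2 → ℝ) :
    M *ᵥ elimv a b = (Mb *ᵥ Sum.elim a b) ∘ ⇑finSumFinEquiv.symm := by
  have hM : M = Mb.submatrix ⇑finSumFinEquiv.symm ⇑finSumFinEquiv.symm := by
    rw [← h, submatrix_submatrix]
    simp [Equiv.self_comp_symm]
  rw [hM, submatrix_mulVec_equiv]
  have h2 : elimv a b ∘ ⇑finSumFinEquiv.symm.symm = Sum.elim a b := by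
    funext j; simp [elimv, Function.comp]
  rw [h2]

lemma unblock_cols {a : Type*} {M : Matrix (Fin (n1 + n2)) a ℝ}
    {Mb : Matrix (Fin n1 ⊕ Fin n2) a ℝ} [Fintype a]
    (h : M.submatrix ⇑finSumFinEquiv id = Mb) (v : a → ℝ) :
    M *ᵥ v = (Mb *ᵥ v) ∘ ⇑finSumFinEquiv.symm := by
  have hM : M = Mb.submatrix ⇑finSumFinEquiv.symm id := by
    rw [← h, submatrix_submatrix]
    simp [Equiv.self_comp_symm]
  rw [hM]
  rfl

lemma key_iff
    (hS : IsUnit S)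
    (hE : (S * E * P).submatrix ⇑finSumFinEquiv ⇑finSumFinEquiv = Matrix.fromBlocks 1 0 0 R)
    (hA : (S * A * P).submatrix ⇑finSumFinEquiv ⇑finSumFinEquiv = Matrix.fromBlocks A1 0 0 1)
    (hB : (S * B).submatrix ⇑finSumFinEquiv id = Matrix.fromRows B1 B2)
    (hFdec : (S * F).submatrix ⇑finSumFinEquiv id = Matrix.fromRows F1 F2)
    (a1 : Fin n1 → ℝ) (a2 : Fin n2 → ℝ) (b1 : Fin n1 → ℝ) (b2 : Fin n2 → ℝ)
    (uu : Fin m → ℝ) (ee : Fin q → ℝ) :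
    (E *ᵥ (P *ᵥ elimv b1 b2) = A *ᵥ (P *ᵥ elimv a1 a2) + B *ᵥ uu + F *ᵥ ee)
    ↔ (b1 = A1 *ᵥ a1 + B1 *ᵥ uu + F1 *ᵥ ee ∧ R *ᵥ b2 = a2 + B2 *ᵥ uu + F2 *ᵥ ee) := by
  have hSdet : IsUnit S.det := (Matrix.isUnit_iff_isUnit_det S).mp hS
  have hSinj : Function.Injective (fun v : Fin (n1 + n2) → ℝ => S *ᵥ v) := by
    intro x y hxy
    have h2 := congrArg (fun v => S⁻¹ *ᵥ v) hxy
    simpa [mulVec_mulVec, Matrix.nonsing_inv_mul S hSdet] using h2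
  have step1 : (E *ᵥ (P *ᵥ elimv b1 b2) = A *ᵥ (P *ᵥ elimv a1 a2) + B *ᵥ uu + F *ᵥ ee)
      ↔ S *ᵥ (E *ᵥ (P *ᵥ elimv b1 b2))
        = S *ᵥ (A *ᵥ (P *ᵥ elimv a1 a2)) + S *ᵥ (B *ᵥ uu) + S *ᵥ (F *ᵥ ee) := by
    rw [← mulVec_add, ← mulVec_add]
    exact ⟨fun h => congrArg _ h, fun h => hSinj h⟩
  rw [step1]
  have hEv : S *ᵥ (E *ᵥ (P *ᵥ elimv b1 b2)) = elimv b1 (R *ᵥ b2) := by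
    rw [mulVec_mulVec, mulVec_mulVec, unblock hE]
    rw [fromBlocks_mulVec]
    funext i
    rcases h : finSumFinEquiv.symm i with x | x <;> simp [elimv, h, Function.comp]
  have hAv : S *ᵥ (A *ᵥ (P *ᵥ elimv a1 a2)) = elimv (A1 *ᵥ a1) a2 := by
    rw [mulVec_mulVec, mulVec_mulVec, unblock hA]
    rw [fromBlocks_mulVec]
    funext i
    rcases h : finSumFinEquiv.symm i with x | x <;> simp [elimv, h, Function.comp]
  have hBv : S *ᵥ (B *ᵥ uu) = elimv (B1 *ᵥ uu) (B2 *ᵥ uu) := by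
    rw [mulVec_mulVec, unblock_cols hB, fromRows_mulVec]
    funext i
    rcases h : finSumFinEquiv.symm i with x | x <;> simp [elimv, h, Function.comp]
  have hFv : S *ᵥ (F *ᵥ ee) = elimv (F1 *ᵥ ee) (F2 *ᵥ ee) := by
    rw [mulVec_mulVec, unblock_cols hFdec, fromRows_mulVec]
    funext i
    rcases h : finSumFinEquiv.symm i with x | x <;> simp [elimv, h, Function.comp]
  rw [hEv, hAv, hBv, hFv, elimv_add, elimv_add, elimv_eq_iff]

end key


lemma sum_smul_elimv {n1 n2 T : ℕ} (c : Fin T → ℝ) (f : Fin T → Fin n1 → ℝ)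
    (h : Fin T → Fin n2 → ℝ) :
    ∑ t : Fin T, c t • elimv (f t) (h t) = elimv (∑ t : Fin T, c t • f t) (∑ t : Fin T, c t • h t) := by
  rw [← sum_elimv]
  exact Finset.sum_congr rfl fun t _ => elimv_smul _ _ _
theorem stmt_10 (n1 n2 s m p q T : ℕ) (hs : 1 ≤ s) (hT : 1 ≤ T)
    (E A : Matrix (Fin (n1 + n2)) (Fin (n1 + n2)) ℝ)
    (B : Matrix (Fin (n1 + n2)) (Fin m) ℝ)
    (F : Matrix (Fin (n1 + n2)) (Fin q) ℝ) (hF : F.rank = q)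
    (C : Matrix (Fin p) (Fin (n1 + n2)) ℝ)
    (S P : Matrix (Fin (n1 + n2)) (Fin (n1 + n2)) ℝ)
    (hS : IsUnit S) (hP : IsUnit P)
    (A1 : Matrix (Fin n1) (Fin n1) ℝ) (R : Matrix (Fin n2) (Fin n2) ℝ)
    (B1 : Matrix (Fin n1) (Fin m) ℝ) (B2 : Matrix (Fin n2) (Fin m) ℝ)
    (F1 : Matrix (Fin n1) (Fin q) ℝ) (F2 : Matrix (Fin n2) (Fin q) ℝ)
    (C1 : Matrix (Fin p) (Fin n1) ℝ) (C2 : Matrix (Fin p) (Fin n2) ℝ)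
    (hR : R ^ s = 0)
    (hE : (S * E * P).submatrix ⇑finSumFinEquiv ⇑finSumFinEquiv = Matrix.fromBlocks 1 0 0 R)
    (hA : (S * A * P).submatrix ⇑finSumFinEquiv ⇑finSumFinEquiv = Matrix.fromBlocks A1 0 0 1)
    (hB : (S * B).submatrix ⇑finSumFinEquiv id = Matrix.fromRows B1 B2)
    (hFdec : (S * F).submatrix ⇑finSumFinEquiv id = Matrix.fromRows F1 F2)
    (hC : (C * P).submatrix id ⇑finSumFinEquiv = Matrix.fromCols C1 C2)
    (ud : ℕ → Fin m → ℝ) (etad : ℕ → Fin q → ℝ)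
    (z1d : ℕ → Fin n1 → ℝ) (z2d : ℕ → Fin n2 → ℝ)
    (xd : ℕ → Fin (n1 + n2) → ℝ) (yd : ℕ → Fin p → ℝ)
    (hz1 : ∀ k < T, z1d (k + 1) = A1 *ᵥ z1d k + B1 *ᵥ ud k + F1 *ᵥ etad k)
    (hz2 : ∀ k ≤ T, z2d k
      = -(∑ j ∈ Finset.range s, (R ^ j *ᵥ (B2 *ᵥ ud (k + j) + F2 *ᵥ etad (k + j)))))
    (hxd : ∀ k ≤ T, xd k = P *ᵥ (fun i => Sum.elim (z1d k) (z2d k) (finSumFinEquiv.symm i)))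
    (hyd : ∀ k ≤ T, yd k = C *ᵥ xd k)
    (hPE : (Matrix.of fun (i : Fin n1 ⊕ (Fin (s + 1) × (Fin m ⊕ Fin q))) (k : Fin T) =>
        Sum.elim (z1d (k : ℕ))
          (fun jl => Sum.elim (ud ((k : ℕ) + (jl.1 : ℕ))) (etad ((k : ℕ) + (jl.1 : ℕ))) jl.2)
          i).rank = n1 + (s + 1) * (m + q))
    :
    ((∃ (AO : Matrix (Fin (n1 + n2)) (Fin (n1 + n2)) ℝ)
        (BOu : Matrix (Fin (n1 + n2)) (Fin m) ℝ)
        (BOy NO : Matrix (Fin (n1 + n2)) (Fin p) ℝ),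
        ∀ (u : ℕ → Fin m → ℝ) (x : ℕ → Fin (n1 + n2) → ℝ) (y : ℕ → Fin p → ℝ),
          ((∃ η : ℕ → Fin q → ℝ,
              ∀ k : ℕ, E *ᵥ x (k + 1) = A *ᵥ x k + B *ᵥ u k + F *ᵥ η k) ∧
            (∀ k : ℕ, y k = C *ᵥ x k)) →
          ∀ k : ℕ, x (k + 1) = AO *ᵥ x k + BOu *ᵥ u k + BOy *ᵥ y k + NO *ᵥ y (k + 1))
      ↔ (∀ g : Fin T → ℝ, histMat T xd 0 *ᵥ g = 0 → histMat T ud 0 *ᵥ g = 0 →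
          histMat T yd 0 *ᵥ g = 0 → histMat T yd 1 *ᵥ g = 0 → histMat T xd 1 *ᵥ g = 0))
    ∧ ((∀ g : Fin T → ℝ, histMat T xd 0 *ᵥ g = 0 → histMat T ud 0 *ᵥ g = 0 →
          histMat T yd 0 *ᵥ g = 0 → histMat T yd 1 *ᵥ g = 0 → histMat T xd 1 *ᵥ g = 0)
      ↔ (∃ (SXp : Matrix (Fin (n1 + n2)) (Fin (n1 + n2)) ℝ)
            (SUp : Matrix (Fin (n1 + n2)) (Fin m) ℝ)
            (SYp SYf : Matrix (Fin (n1 + n2)) (Fin p) ℝ),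
          histMat T xd 1 = SXp * histMat T xd 0 + SUp * histMat T ud 0
            + SYp * histMat T yd 0 + SYf * histMat T yd 1)) := by
  classical
  have hPdet : IsUnit P.det := (Matrix.isUnit_iff_isUnit_det P).mp hP
  have hPP : P * P⁻¹ = 1 := Matrix.mul_nonsing_inv P hPdet
  have keyI := key_iff E A B F S P A1 R B1 B2 F1 F2 hS hE hA hB hFdec
  have hxd' : ∀ k, k ≤ T → xd k = P *ᵥ elimv (z1d k) (z2d k) := fun k hk => hxd k hk
  -- (b → c)
  have hb2c : (∀ g : Fin T → ℝ, histMat T xd 0 *ᵥ g = 0 → histMat T ud 0 *ᵥ g = 0 →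
        histMat T yd 0 *ᵥ g = 0 → histMat T yd 1 *ᵥ g = 0 → histMat T xd 1 *ᵥ g = 0) →
      (∃ (SXp : Matrix (Fin (n1 + n2)) (Fin (n1 + n2)) ℝ)
          (SUp : Matrix (Fin (n1 + n2)) (Fin m) ℝ)
          (SYp SYf : Matrix (Fin (n1 + n2)) (Fin p) ℝ),
        histMat T xd 1 = SXp * histMat T xd 0 + SUp * histMat T ud 0
          + SYp * histMat T yd 0 + SYf * histMat T yd 1) := by
    intro hb
    have hker : ∀ g : Fin T → ℝ,
        (Matrix.fromRows (Matrix.fromRows (histMat T xd 0) (histMat T ud 0))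
          (Matrix.fromRows (histMat T yd 0) (histMat T yd 1))) *ᵥ g = 0 →
        histMat T xd 1 *ᵥ g = 0 := by
      intro g hg
      rw [fromRows_mulVec, fromRows_mulVec, fromRows_mulVec] at hg
      apply hb g
      · funext i; simpa using congrFun hg (Sum.inl (Sum.inl i))
      · funext i; simpa using congrFun hg (Sum.inl (Sum.inr i))
      · funext i; simpa using congrFun hg (Sum.inr (Sum.inl i))
      · funext i; simpa using congrFun hg (Sum.inr (Sum.inr i))
    obtain ⟨H, hH⟩ := exists_matrix_factor _ _ hker
    refine ⟨H.submatrix id (Sum.inl ∘ Sum.inl), H.submatrix id (Sum.inl ∘ Sum.inr),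
      H.submatrix id (Sum.inr ∘ Sum.inl), H.submatrix id (Sum.inr ∘ Sum.inr), ?_⟩
    rw [hH, mul_fromRows', mul_fromRows', mul_fromRows']
    simp only [submatrix_submatrix, Function.comp_id, add_assoc]
  -- (c → b)
  have hc2b : (∃ (SXp : Matrix (Fin (n1 + n2)) (Fin (n1 + n2)) ℝ)
          (SUp : Matrix (Fin (n1 + n2)) (Fin m) ℝ)
          (SYp SYf : Matrix (Fin (n1 + n2)) (Fin p) ℝ),
        histMat T xd 1 = SXp * histMat T xd 0 + SUp * histMat T ud 0
          + SYp * histMat T yd 0 + SYf * histMat T yd 1) →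
      (∀ g : Fin T → ℝ, histMat T xd 0 *ᵥ g = 0 → histMat T ud 0 *ᵥ g = 0 →
        histMat T yd 0 *ᵥ g = 0 → histMat T yd 1 *ᵥ g = 0 → histMat T xd 1 *ᵥ g = 0) := by
    rintro ⟨SXp, SUp, SYp, SYf, hfac⟩ g h1 h2 h3 h4
    rw [hfac, add_mulVec, add_mulVec, add_mulVec, ← mulVec_mulVec, ← mulVec_mulVec,
      ← mulVec_mulVec, ← mulVec_mulVec, h1, h2, h3, h4]
    simp
  -- (a → c)
  have ha2c : (∃ (AO : Matrix (Fin (n1 + n2)) (Fin (n1 + n2)) ℝ)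
        (BOu : Matrix (Fin (n1 + n2)) (Fin m) ℝ)
        (BOy NO : Matrix (Fin (n1 + n2)) (Fin p) ℝ),
        ∀ (u : ℕ → Fin m → ℝ) (x : ℕ → Fin (n1 + n2) → ℝ) (y : ℕ → Fin p → ℝ),
          ((∃ η : ℕ → Fin q → ℝ,
              ∀ k : ℕ, E *ᵥ x (k + 1) = A *ᵥ x k + B *ᵥ u k + F *ᵥ η k) ∧
            (∀ k : ℕ, y k = C *ᵥ x k)) →
          ∀ k : ℕ, x (k + 1) = AO *ᵥ x k + BOu *ᵥ u k + BOy *ᵥ y k + NO *ᵥ y (k + 1)) →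
      (∃ (SXp : Matrix (Fin (n1 + n2)) (Fin (n1 + n2)) ℝ)
          (SUp : Matrix (Fin (n1 + n2)) (Fin m) ℝ)
          (SYp SYf : Matrix (Fin (n1 + n2)) (Fin p) ℝ),
        histMat T xd 1 = SXp * histMat T xd 0 + SUp * histMat T ud 0
          + SYp * histMat T yd 0 + SYf * histMat T yd 1) := by
    rintro ⟨AO, BOu, BOy, NO, hobs⟩
    set zt1 : ℕ → Fin n1 → ℝ :=
      fun k => Nat.rec (z1d 0) (fun k z => A1 *ᵥ z + B1 *ᵥ ud k + F1 *ᵥ etad k) k with hzt1def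
    have hzt1succ : ∀ k, zt1 (k + 1) = A1 *ᵥ zt1 k + B1 *ᵥ ud k + F1 *ᵥ etad k := fun k => rfl
    have hzt1 : ∀ k, k ≤ T → zt1 k = z1d k := by
      intro k
      induction k with
      | zero => intro _; rfl
      | succ k ih =>
        intro hk
        rw [hzt1succ k, ih (by omega), ← hz1 k (by omega)]
    set zt2 : ℕ → Fin n2 → ℝ :=
      fun k => -(∑ j ∈ Finset.range s, R ^ j *ᵥ (B2 *ᵥ ud (k + j) + F2 *ᵥ etad (k + j)))
      with hzt2def
    have hzt2 : ∀ k, k ≤ T → zt2 k = z2d k := fun k hk => (hz2 k hk).symm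
    set xt : ℕ → Fin (n1 + n2) → ℝ := fun k => P *ᵥ elimv (zt1 k) (zt2 k) with hxtdef
    have hxt : ∀ k, k ≤ T → xt k = xd k := by
      intro k hk
      show P *ᵥ elimv (zt1 k) (zt2 k) = xd k
      rw [hzt1 k hk, hzt2 k hk, ← hxd' k hk]
    set yt : ℕ → Fin p → ℝ := fun k => C *ᵥ xt k with hytdef
    have hyt : ∀ k, k ≤ T → yt k = yd k := by
      intro k hk
      show C *ᵥ xt k = yd k
      rw [hxt k hk, ← hyd k hk]
    have htraj : ∀ k, E *ᵥ xt (k + 1) = A *ᵥ xt k + B *ᵥ ud k + F *ᵥ etad k := by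
      intro k
      apply (keyI (zt1 k) (zt2 k) (zt1 (k + 1)) (zt2 (k + 1)) (ud k) (etad k)).mpr
      refine ⟨hzt1succ k, ?_⟩
      have h8 := fast_recur R hs hR (fun k => B2 *ᵥ ud k + F2 *ᵥ etad k) k
      rw [← add_assoc] at h8
      exact h8
    have hobs' := hobs ud xt yt ⟨⟨etad, htraj⟩, fun k => rfl⟩
    refine ⟨AO, BOu, BOy, NO, ?_⟩
    ext i t
    have h5 := hobs' t
    have htT : (t : ℕ) < T := t.isLt
    rw [hxt ((t : ℕ) + 1) (by omega), hxt (t : ℕ) (by omega), hyt (t : ℕ) (by omega), hyt ((t : ℕ) + 1) (by omega)] at h5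
    have h6 := congrFun h5 i
    simpa [histMat, Matrix.mul_apply, mulVec, dotProduct] using h6
  -- (c → a)
  have hc2a : (∃ (SXp : Matrix (Fin (n1 + n2)) (Fin (n1 + n2)) ℝ)
          (SUp : Matrix (Fin (n1 + n2)) (Fin m) ℝ)
          (SYp SYf : Matrix (Fin (n1 + n2)) (Fin p) ℝ),
        histMat T xd 1 = SXp * histMat T xd 0 + SUp * histMat T ud 0
          + SYp * histMat T yd 0 + SYf * histMat T yd 1) →
      (∃ (AO : Matrix (Fin (n1 + n2)) (Fin (n1 + n2)) ℝ)
        (BOu : Matrix (Fin (n1 + n2)) (Fin m) ℝ)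
        (BOy NO : Matrix (Fin (n1 + n2)) (Fin p) ℝ),
        ∀ (u : ℕ → Fin m → ℝ) (x : ℕ → Fin (n1 + n2) → ℝ) (y : ℕ → Fin p → ℝ),
          ((∃ η : ℕ → Fin q → ℝ,
              ∀ k : ℕ, E *ᵥ x (k + 1) = A *ᵥ x k + B *ᵥ u k + F *ᵥ η k) ∧
            (∀ k : ℕ, y k = C *ᵥ x k)) →
          ∀ k : ℕ, x (k + 1) = AO *ᵥ x k + BOu *ᵥ u k + BOy *ᵥ y k + NO *ᵥ y (k + 1)) := by
    rintro ⟨SXp, SUp, SYp, SYf, hfac⟩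
    refine ⟨SXp, SUp, SYp, SYf, ?_⟩
    rintro u x y ⟨⟨η, hdyn⟩, hout⟩ k0
    set z1 : ℕ → Fin n1 → ℝ := fun k i => (P⁻¹ *ᵥ x k) (finSumFinEquiv (Sum.inl i)) with hz1def
    set z2 : ℕ → Fin n2 → ℝ := fun k i => (P⁻¹ *ᵥ x k) (finSumFinEquiv (Sum.inr i)) with hz2def'
    have hxz : ∀ k, x k = P *ᵥ elimv (z1 k) (z2 k) := by
      intro k
      have h1 : elimv (z1 k) (z2 k) = P⁻¹ *ᵥ x k := by
        funext i
        have hi : i = finSumFinEquiv (finSumFinEquiv.symm i) := (Equiv.apply_symm_apply _ _).symm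
        rcases hh : finSumFinEquiv.symm i with x' | x' <;>
          · rw [hi, hh]
            simp [elimv, hz1def, hz2def']
      rw [h1, mulVec_mulVec, hPP, one_mulVec]
    have hco : ∀ k, (z1 (k + 1) = A1 *ᵥ z1 k + B1 *ᵥ u k + F1 *ᵥ η k) ∧
        (R *ᵥ z2 (k + 1) = z2 k + B2 *ᵥ u k + F2 *ᵥ η k) := by
      intro k
      apply (keyI (z1 k) (z2 k) (z1 (k + 1)) (z2 (k + 1)) (u k) (η k)).mp
      rw [← hxz, ← hxz]
      exact hdyn k
    have hz2form : ∀ k, z2 k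
        = -(∑ j ∈ Finset.range s, R ^ j *ᵥ (B2 *ᵥ u (k + j) + F2 *ᵥ η (k + j))) := by
      apply fast_formula R hR z2 (fun k => B2 *ᵥ u k + F2 *ᵥ η k)
      intro k
      rw [(hco k).2, add_assoc]
    have hsurj : ∀ w : Fin n1 ⊕ (Fin (s + 1) × (Fin m ⊕ Fin q)) → ℝ,
        ∃ gv : Fin T → ℝ,
          (Matrix.of fun (i : Fin n1 ⊕ (Fin (s + 1) × (Fin m ⊕ Fin q))) (k : Fin T) =>
            Sum.elim (z1d (k : ℕ))
              (fun jl => Sum.elim (ud ((k : ℕ) + (jl.1 : ℕ))) (etad ((k : ℕ) + (jl.1 : ℕ))) jl.2)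
              i) *ᵥ gv = w := by
      have htop : LinearMap.range (Matrix.of fun
          (i : Fin n1 ⊕ (Fin (s + 1) × (Fin m ⊕ Fin q))) (k : Fin T) =>
            Sum.elim (z1d (k : ℕ))
              (fun jl => Sum.elim (ud ((k : ℕ) + (jl.1 : ℕ))) (etad ((k : ℕ) + (jl.1 : ℕ))) jl.2)
              i).mulVecLin = ⊤ := by
        apply Submodule.eq_top_of_finrank_eq
        rw [Module.finrank_fintype_fun_eq_card]
        refine hPE.trans ?_
        simp [Fintype.card_sum, Fintype.card_prod]
      intro w
      obtain ⟨gv, hgv⟩ := LinearMap.range_eq_top.mp htop w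
      exact ⟨gv, hgv⟩
    obtain ⟨g, hg⟩ := hsurj (Sum.elim (z1 k0)
      (fun jl => Sum.elim (u (k0 + (jl.1 : ℕ))) (η (k0 + (jl.1 : ℕ))) jl.2))
    have hgz1 : ∑ t : Fin T, g t • z1d (t : ℕ) = z1 k0 := by
      funext i
      have h7 := congrFun hg (Sum.inl i)
      simpa [mulVec, dotProduct, Finset.sum_apply, mul_comm] using h7
    have hgu : ∀ j : ℕ, j ≤ s → ∑ t : Fin T, g t • ud ((t : ℕ) + j) = u (k0 + j) := by
      intro j hj
      funext i
      have h7 := congrFun hg (Sum.inr (⟨j, by omega⟩, Sum.inl i))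
      simpa [mulVec, dotProduct, Finset.sum_apply, mul_comm] using h7
    have hge : ∀ j : ℕ, j ≤ s → ∑ t : Fin T, g t • etad ((t : ℕ) + j) = η (k0 + j) := by
      intro j hj
      funext i
      have h7 := congrFun hg (Sum.inr (⟨j, by omega⟩, Sum.inr i))
      simpa [mulVec, dotProduct, Finset.sum_apply, mul_comm] using h7
    have hgz2 : ∀ off : ℕ, off ≤ 1 →
        ∑ t : Fin T, g t • z2d ((t : ℕ) + off) = z2 (k0 + off) := by
      intro off hoff
      calc ∑ t : Fin T, g t • z2d ((t : ℕ) + off)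
          = ∑ t : Fin T, g t • -(∑ j ∈ Finset.range s,
              R ^ j *ᵥ (B2 *ᵥ ud ((t : ℕ) + off + j) + F2 *ᵥ etad ((t : ℕ) + off + j))) :=
            Finset.sum_congr rfl fun t _ => by
              rw [hz2 _ (by have := t.isLt; omega)]
        _ = -(∑ j ∈ Finset.range s,
              R ^ j *ᵥ (B2 *ᵥ u (k0 + off + j) + F2 *ᵥ η (k0 + off + j))) := by
            apply sum_smul_fast
            intro j hjs
            have hu' := hgu (off + j) (by omega)
            have he' := hge (off + j) (by omega)
            simp only [← add_assoc] at hu' he'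
            calc ∑ t : Fin T, g t • (B2 *ᵥ ud ((t : ℕ) + off + j) + F2 *ᵥ etad ((t : ℕ) + off + j))
                = (∑ t : Fin T, g t • (B2 *ᵥ ud ((t : ℕ) + off + j)))
                  + ∑ t : Fin T, g t • (F2 *ᵥ etad ((t : ℕ) + off + j)) := by
                  rw [← Finset.sum_add_distrib]
                  exact Finset.sum_congr rfl fun t _ => smul_add _ _ _
              _ = B2 *ᵥ (∑ t : Fin T, g t • ud ((t : ℕ) + off + j))
                  + F2 *ᵥ (∑ t : Fin T, g t • etad ((t : ℕ) + off + j)) := by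
                  rw [mulVec_sum_smul, mulVec_sum_smul]
              _ = B2 *ᵥ u (k0 + off + j) + F2 *ᵥ η (k0 + off + j) := by rw [hu', he']
        _ = z2 (k0 + off) := (hz2form (k0 + off)).symm
    have hgz1' : ∑ t : Fin T, g t • z1d ((t : ℕ) + 1) = z1 (k0 + 1) := by
      have hu0 := hgu 0 (by omega)
      have he0 := hge 0 (by omega)
      simp only [Nat.add_zero] at hu0 he0
      calc ∑ t : Fin T, g t • z1d ((t : ℕ) + 1)
          = ∑ t : Fin T, (g t • (A1 *ᵥ z1d (t : ℕ))
              + (g t • (B1 *ᵥ ud (t : ℕ)) + g t • (F1 *ᵥ etad (t : ℕ)))) := by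
            refine Finset.sum_congr rfl fun t _ => ?_
            rw [hz1 _ t.isLt, smul_add, smul_add, add_assoc]
        _ = (∑ t : Fin T, g t • (A1 *ᵥ z1d (t : ℕ)))
            + ((∑ t : Fin T, g t • (B1 *ᵥ ud (t : ℕ)))
              + ∑ t : Fin T, g t • (F1 *ᵥ etad (t : ℕ))) := by
            rw [Finset.sum_add_distrib, Finset.sum_add_distrib]
        _ = A1 *ᵥ (∑ t : Fin T, g t • z1d (t : ℕ))
            + (B1 *ᵥ (∑ t : Fin T, g t • ud (t : ℕ))
              + F1 *ᵥ (∑ t : Fin T, g t • etad (t : ℕ))) := by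
            rw [mulVec_sum_smul, mulVec_sum_smul, mulVec_sum_smul]
        _ = A1 *ᵥ z1 k0 + (B1 *ᵥ u k0 + F1 *ᵥ η k0) := by
            rw [hgz1, hu0, he0]
        _ = z1 (k0 + 1) := by rw [(hco k0).1, add_assoc]
    have hXp : histMat T xd 0 *ᵥ g = x k0 := by
      rw [histMat_mulVec]
      calc ∑ t : Fin T, g t • xd ((t : ℕ) + 0)
          = ∑ t : Fin T, g t • (P *ᵥ elimv (z1d (t : ℕ)) (z2d (t : ℕ))) :=
            Finset.sum_congr rfl fun t _ => by
              rw [show (t : ℕ) + 0 = (t : ℕ) from rfl, hxd' (t : ℕ) (by have := t.isLt; omega)]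
        _ = P *ᵥ elimv (∑ t : Fin T, g t • z1d (t : ℕ)) (∑ t : Fin T, g t • z2d (t : ℕ)) := by
            rw [← mulVec_sum_smul, sum_smul_elimv]
        _ = P *ᵥ elimv (z1 k0) (z2 k0) := by
            have h0 := hgz2 0 (by omega)
            simp only [Nat.add_zero] at h0
            rw [hgz1, h0]
        _ = x k0 := (hxz k0).symm
    have hUp : histMat T ud 0 *ᵥ g = u k0 := by
      rw [histMat_mulVec]
      have h0 := hgu 0 (by omega)
      simp only [Nat.add_zero] at h0 ⊢
      exact h0
    have hYp : histMat T yd 0 *ᵥ g = y k0 := by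
      rw [histMat_mulVec]
      calc ∑ t : Fin T, g t • yd ((t : ℕ) + 0)
          = ∑ t : Fin T, g t • (C *ᵥ xd ((t : ℕ) + 0)) :=
            Finset.sum_congr rfl fun t _ => by rw [hyd _ (by have := t.isLt; omega)]
        _ = C *ᵥ (∑ t : Fin T, g t • xd ((t : ℕ) + 0)) := (mulVec_sum_smul _ _ _ _).symm
        _ = C *ᵥ x k0 := by rw [← histMat_mulVec, hXp]
        _ = y k0 := (hout k0).symm
    have hXf : histMat T xd 1 *ᵥ g = x (k0 + 1) := by
      rw [histMat_mulVec]
      calc ∑ t : Fin T, g t • xd ((t : ℕ) + 1)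
          = ∑ t : Fin T, g t • (P *ᵥ elimv (z1d ((t : ℕ) + 1)) (z2d ((t : ℕ) + 1))) :=
            Finset.sum_congr rfl fun t _ => by rw [hxd' _ (by have := t.isLt; omega)]
        _ = P *ᵥ elimv (∑ t : Fin T, g t • z1d ((t : ℕ) + 1))
              (∑ t : Fin T, g t • z2d ((t : ℕ) + 1)) := by
            rw [← mulVec_sum_smul, sum_smul_elimv]
        _ = P *ᵥ elimv (z1 (k0 + 1)) (z2 (k0 + 1)) := by rw [hgz1', hgz2 1 (by omega)]
        _ = x (k0 + 1) := (hxz (k0 + 1)).symm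
    have hYf : histMat T yd 1 *ᵥ g = y (k0 + 1) := by
      rw [histMat_mulVec]
      calc ∑ t : Fin T, g t • yd ((t : ℕ) + 1)
          = ∑ t : Fin T, g t • (C *ᵥ xd ((t : ℕ) + 1)) :=
            Finset.sum_congr rfl fun t _ => by rw [hyd _ (by have := t.isLt; omega)]
        _ = C *ᵥ (∑ t : Fin T, g t • xd ((t : ℕ) + 1)) := (mulVec_sum_smul _ _ _ _).symm
        _ = C *ᵥ x (k0 + 1) := by rw [← histMat_mulVec, hXf]
        _ = y (k0 + 1) := (hout (k0 + 1)).symm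
    have happ := congrArg (fun M => M *ᵥ g) hfac
    rw [hXf, add_mulVec, add_mulVec, add_mulVec, ← mulVec_mulVec, ← mulVec_mulVec,
      ← mulVec_mulVec, ← mulVec_mulVec, hXp, hUp, hYp, hYf] at happ
    exact happ
  exact ⟨⟨fun ha => hc2b (ha2c ha), fun hb => hc2a (hb2c hb)⟩, hb2c, hc2b⟩
end
end

section
/- Assume the unknown-input Weierstrass decomposition, unknown-input historical data, and unknown-input persistent excitation hypotheses. Suppose every g ∈ ℝ^T with X_p·g = 0, U_p·g = 0, Y_p·g = 0 and Y_f·g = 0 satisfies X_f·g = 0, and suppose there exist matrices Σ_{X_p} ∈ ℝ^{n×n}, Σ_{U_p} ∈ ℝ^{n×m}, Σ_{Y_p} ∈ ℝ^{n×p}, Σ_{Y_f} ∈ ℝ^{n×p} with X_f = Σ_{X_p}·X_p + Σ_{U_p}·U_p + Σ_{Y_p}·Y_p + Σ_{Y_f}·Y_f and Σ_{X_p} Schur stable. Then for every trajectory (u, x, y) of the unknown-input descriptor system (with arbitrary unknown input η) and every initial estimate x̂(0) ∈ ℝ^n, the sequence defined recursively by x̂(k+1) = Σ_{X_p}·x̂(k)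 + Σ_{U_p}·u(k) + Σ_{Y_p}·y(k) + Σ_{Y_f}·y(k+1) satisfies ‖x(k) − x̂(k)‖ → 0 as k → ∞. -/
open Matrix

noncomputable section

/-! ### Auxiliary lemmas about `histMat` -/

lemma histMat_congr {ι : Type} {T : ℕ} {f f' : ℕ → ι → ℝ} {a b : ℕ}
    (h : ∀ t, t < T → f (t + a) = f' (t + b)) : histMat T f a = histMat T f' b := by
  ext i t; exact congrFun (h t t.isLt) i

lemma histMat_matrix {ι ι' : Type} [Fintype ι] (T : ℕ) (N : Matrix ι' ι ℝ) (f : ℕ → ι → ℝ)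
    (a : ℕ) : histMat T (fun k => N *ᵥ f k) a = N * histMat T f a := by
  ext i t; simp [histMat, Matrix.mul_apply, Matrix.mulVec, dotProduct]

lemma histMat_add {ι : Type} (T : ℕ) (f h : ℕ → ι → ℝ) (a : ℕ) :
    histMat T (fun k => f k + h k) a = histMat T f a + histMat T h a := by
  ext i t; simp [histMat]

lemma histMat_neg {ι : Type} (T : ℕ) (f : ℕ → ι → ℝ) (a : ℕ) :
    histMat T (fun k => -(f k)) a = -histMat T f a := by
  ext i t; simp [histMat]

lemma histMat_sum {ι γ : Type} (T : ℕ) (G : Finset γ) (f : γ → ℕ → ι → ℝ) (a : ℕ) :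
    histMat T (fun k => ∑ j ∈ G, f j k) a = ∑ j ∈ G, histMat T (f j) a := by
  ext i t; simp [histMat, Matrix.sum_apply]

lemma histMat_shift {ι : Type} (T : ℕ) (f : ℕ → ι → ℝ) (a j : ℕ) :
    histMat T (fun k => f (k + j)) a = histMat T f (a + j) := by
  ext i t; simp [histMat, Nat.add_assoc, Nat.add_comm a j]

lemma sum_mulVec' {ι κ γ : Type} [Fintype κ] (G : Finset γ) (N : γ → Matrix ι κ ℝ) (v : κ → ℝ) :
    (∑ j ∈ G, N j) *ᵥ v = ∑ j ∈ G, N j *ᵥ v := by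
  ext i
  simp only [Matrix.mulVec, dotProduct, Finset.sum_apply, Finset.sum_mul, Matrix.sum_apply]
  rw [Finset.sum_comm]

lemma surj_of_rank_eq_card {α : Type} [Fintype α] [DecidableEq α] {T : ℕ}
    (M : Matrix α (Fin T) ℝ) (h : M.rank = Fintype.card α) :
    Function.Surjective M.mulVecLin := by
  rw [← LinearMap.range_eq_top]
  apply Submodule.eq_top_of_finrank_eq
  have h' : Module.finrank ℝ (LinearMap.range M.mulVecLin) = Fintype.card α := h
  rw [h', Module.finrank_fintype_fun_eq_card]

/-! ### Convergence of powers of a Schur stable matrix -/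

section Schur
open scoped ENNReal NNReal

attribute [local instance] Matrix.linftyOpNormedAddCommGroup Matrix.linftyOpNormedRing
  Matrix.linftyOpNormedAlgebra

lemma cmap_pow {N : ℕ} (M : Matrix (Fin N) (Fin N) ℝ) (k : ℕ) :
    cmap (M ^ k) = (cmap M) ^ k := by
  have h : ∀ (Q : Matrix (Fin N) (Fin N) ℝ), cmap Q = Complex.ofRealHom.mapMatrix Q := fun _ => rfl
  rw [h, h, map_pow]

lemma nnnorm_cmap {N : ℕ} (M : Matrix (Fin N) (Fin N) ℝ) : ‖cmap M‖₊ = ‖M‖₊ := by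
  rw [Matrix.linfty_opNNNorm_def, Matrix.linfty_opNNNorm_def]
  congr 1; ext i; congr 1; ext j
  simp [cmap]

lemma spectralRadius_lt_one {N : ℕ} (M : Matrix (Fin N) (Fin N) ℝ) (h : SchurStable M) :
    spectralRadius ℂ (cmap M) < 1 := by
  have hfin : (spectrum ℂ (cmap M)).Finite := Matrix.finite_spectrum _
  have hle : spectralRadius ℂ (cmap M) ≤ hfin.toFinset.sup (fun μ => (‖μ‖₊ : ℝ≥0∞)) := by
    rw [spectralRadius]
    exact iSup₂_le fun μ hμ =>
      Finset.le_sup (f := fun μ => (‖μ‖₊ : ℝ≥0∞)) (hfin.mem_toFinset.mpr hμ)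
  refine lt_of_le_of_lt hle ?_
  rw [Finset.sup_lt_iff (by norm_num : (⊥ : ℝ≥0∞) < 1)]
  intro μ hμ
  have habs : ‖μ‖ < 1 := h μ (by simpa [cmap] using hfin.mem_toFinset.mp hμ)
  have : ‖μ‖₊ < 1 := by
    rw [← NNReal.coe_lt_coe]
    simpa [coe_nnnorm] using habs
  exact_mod_cast this

lemma schur_norm_pow_tendsto {N : ℕ} (M : Matrix (Fin N) (Fin N) ℝ) (h : SchurStable M) :
    Filter.Tendsto (fun k => ‖M ^ k‖) Filter.atTop (nhds 0) := by
  haveI : CompleteSpace (Matrix (Fin N) (Fin N) ℂ) := FiniteDimensional.complete ℂ _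
  have hρ := spectralRadius_lt_one M h
  obtain ⟨r, hr1, hr2⟩ := ENNReal.lt_iff_exists_nnreal_btwn.mp hρ
  have hG := spectrum.pow_nnnorm_pow_one_div_tendsto_nhds_spectralRadius (cmap M)
  have hEv : ∀ᶠ (n : ℕ) in Filter.atTop,
      ((‖(cmap M) ^ n‖₊ : ℝ≥0∞)) ^ (1 / (n : ℝ)) < (r : ℝ≥0∞) := hG.eventually_lt_const hr1
  have hbd : ∀ᶠ n in Filter.atTop, (‖(cmap M) ^ n‖₊ : ℝ≥0∞) ≤ (r : ℝ≥0∞) ^ n := by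
    filter_upwards [hEv, Filter.eventually_ge_atTop 1] with n hn hn1
    have hne : (n : ℝ) ≠ 0 := by positivity
    calc (‖(cmap M) ^ n‖₊ : ℝ≥0∞)
        = (((‖(cmap M) ^ n‖₊ : ℝ≥0∞)) ^ (1 / (n : ℝ))) ^ (n : ℝ) := by
          rw [← ENNReal.rpow_mul, one_div_mul_cancel hne, ENNReal.rpow_one]
      _ ≤ (r : ℝ≥0∞) ^ (n : ℝ) := ENNReal.rpow_le_rpow hn.le (by positivity)
      _ = (r : ℝ≥0∞) ^ n := by rw [ENNReal.rpow_natCast]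
  have hpow : Filter.Tendsto (fun n => ((r : ℝ≥0∞)) ^ n) Filter.atTop (nhds 0) :=
    ENNReal.tendsto_pow_atTop_nhds_zero_of_lt_one hr2
  have h0 : Filter.Tendsto (fun n => (‖(cmap M) ^ n‖₊ : ℝ≥0∞)) Filter.atTop (nhds 0) := by
    apply tendsto_of_tendsto_of_tendsto_of_le_of_le' tendsto_const_nhds hpow
    · exact Filter.Eventually.of_forall fun n => zero_le
    · exact hbd
  rw [← ENNReal.coe_zero, ENNReal.tendsto_coe] at h0
  have h1 : Filter.Tendsto (fun n => ‖(cmap M) ^ n‖) Filter.atTop (nhds 0) := by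
    rw [← NNReal.coe_zero]
    exact (NNReal.tendsto_coe.mpr h0)
  have heq : ∀ n, ‖M ^ n‖ = ‖(cmap M) ^ n‖ := by
    intro n
    rw [← cmap_pow, ← coe_nnnorm, ← coe_nnnorm, nnnorm_cmap]
  simpa [heq] using h1

theorem stmt_11 (n1 n2 s m p q T : ℕ) (hs : 1 ≤ s) (hT : 1 ≤ T)
    (E A : Matrix (Fin (n1 + n2)) (Fin (n1 + n2)) ℝ)
    (B : Matrix (Fin (n1 + n2)) (Fin m) ℝ)
    (F : Matrix (Fin (n1 + n2)) (Fin q) ℝ) (hF : F.rank = q)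
    (C : Matrix (Fin p) (Fin (n1 + n2)) ℝ)
    (S P : Matrix (Fin (n1 + n2)) (Fin (n1 + n2)) ℝ)
    (hS : IsUnit S) (hP : IsUnit P)
    (A1 : Matrix (Fin n1) (Fin n1) ℝ) (R : Matrix (Fin n2) (Fin n2) ℝ)
    (B1 : Matrix (Fin n1) (Fin m) ℝ) (B2 : Matrix (Fin n2) (Fin m) ℝ)
    (F1 : Matrix (Fin n1) (Fin q) ℝ) (F2 : Matrix (Fin n2) (Fin q) ℝ)
    (C1 : Matrix (Fin p) (Fin n1) ℝ) (C2 : Matrix (Fin p) (Fin n2) ℝ)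
    (hR : R ^ s = 0)
    (hE : (S * E * P).submatrix ⇑finSumFinEquiv ⇑finSumFinEquiv = Matrix.fromBlocks 1 0 0 R)
    (hA : (S * A * P).submatrix ⇑finSumFinEquiv ⇑finSumFinEquiv = Matrix.fromBlocks A1 0 0 1)
    (hB : (S * B).submatrix ⇑finSumFinEquiv id = Matrix.fromRows B1 B2)
    (hFdec : (S * F).submatrix ⇑finSumFinEquiv id = Matrix.fromRows F1 F2)
    (hC : (C * P).submatrix id ⇑finSumFinEquiv = Matrix.fromCols C1 C2)
    (ud : ℕ → Fin m → ℝ) (etad : ℕ → Fin q → ℝ)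
    (z1d : ℕ → Fin n1 → ℝ) (z2d : ℕ → Fin n2 → ℝ)
    (xd : ℕ → Fin (n1 + n2) → ℝ) (yd : ℕ → Fin p → ℝ)
    (hz1 : ∀ k < T, z1d (k + 1) = A1 *ᵥ z1d k + B1 *ᵥ ud k + F1 *ᵥ etad k)
    (hz2 : ∀ k ≤ T, z2d k
      = -(∑ j ∈ Finset.range s, (R ^ j *ᵥ (B2 *ᵥ ud (k + j) + F2 *ᵥ etad (k + j)))))
    (hxd : ∀ k ≤ T, xd k = P *ᵥ (fun i => Sum.elim (z1d k) (z2d k) (finSumFinEquiv.symm i)))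
    (hyd : ∀ k ≤ T, yd k = C *ᵥ xd k)
    (hPE : (Matrix.of fun (i : Fin n1 ⊕ (Fin (s + 1) × (Fin m ⊕ Fin q))) (k : Fin T) =>
        Sum.elim (z1d (k : ℕ))
          (fun jl => Sum.elim (ud ((k : ℕ) + (jl.1 : ℕ))) (etad ((k : ℕ) + (jl.1 : ℕ))) jl.2)
          i).rank = n1 + (s + 1) * (m + q))
    (hker : ∀ g : Fin T → ℝ, histMat T xd 0 *ᵥ g = 0 → histMat T ud 0 *ᵥ g = 0 →
      histMat T yd 0 *ᵥ g = 0 → histMat T yd 1 *ᵥ g = 0 → histMat T xd 1 *ᵥ g = 0)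
    (SXp : Matrix (Fin (n1 + n2)) (Fin (n1 + n2)) ℝ)
    (SUp : Matrix (Fin (n1 + n2)) (Fin m) ℝ)
    (SYp SYf : Matrix (Fin (n1 + n2)) (Fin p) ℝ)
    (hSig : histMat T xd 1 = SXp * histMat T xd 0 + SUp * histMat T ud 0
      + SYp * histMat T yd 0 + SYf * histMat T yd 1)
    (hSchur : SchurStable SXp)
    (u : ℕ → Fin m → ℝ) (x : ℕ → Fin (n1 + n2) → ℝ) (y : ℕ → Fin p → ℝ)
    (η : ℕ → Fin q → ℝ)
    (htraj1 : ∀ k : ℕ, E *ᵥ x (k + 1) = A *ᵥ x k + B *ᵥ u k + F *ᵥ η k)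
    (htraj2 : ∀ k : ℕ, y k = C *ᵥ x k)
    (xhat : ℕ → Fin (n1 + n2) → ℝ)
    (hobs : ∀ k : ℕ, xhat (k + 1)
      = SXp *ᵥ xhat k + SUp *ᵥ u k + SYp *ᵥ y k + SYf *ᵥ y (k + 1)) :
    Filter.Tendsto (fun k => ‖x k - xhat k‖) Filter.atTop (nhds 0) := by
  classical
  set e := (finSumFinEquiv : Fin n1 ⊕ Fin n2 ≃ Fin (n1 + n2)) with he
  set Pi := (↑hP.unit⁻¹ : Matrix (Fin (n1+n2)) (Fin (n1+n2)) ℝ) with hPidef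
  have hPPi : P * Pi = 1 := by
    have h := hP.unit.mul_inv
    rwa [hP.unit_spec] at h
  set w : ℕ → (Fin n1 ⊕ Fin n2) → ℝ := fun k i => (Pi *ᵥ x k) (e i) with hw
  set z1 : ℕ → Fin n1 → ℝ := fun k i => w k (Sum.inl i) with hz1def
  set z2 : ℕ → Fin n2 → ℝ := fun k i => w k (Sum.inr i) with hz2def
  have hwz : ∀ k, w k = Sum.elim (z1 k) (z2 k) := by
    intro k; funext i; cases i <;> rfl
  have hx : ∀ k, x k = P *ᵥ (fun i => w k (e.symm i)) := by
    intro k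
    have h1 : (fun i => w k (e.symm i)) = Pi *ᵥ x k := by
      funext i; simp [hw]
    rw [h1, Matrix.mulVec_mulVec, hPPi, Matrix.one_mulVec]
  have hblock : ∀ k,
      Matrix.fromBlocks 1 0 0 R *ᵥ (Sum.elim (z1 (k+1)) (z2 (k+1)))
        = Matrix.fromBlocks A1 0 0 1 *ᵥ (Sum.elim (z1 k) (z2 k))
          + Matrix.fromRows B1 B2 *ᵥ u k + Matrix.fromRows F1 F2 *ᵥ η k := by
    intro k
    have hcompat : ∀ kk, ((S * E * P).submatrix ⇑e ⇑e) *ᵥ (w kk)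
        = (S *ᵥ (E *ᵥ x kk)) ∘ e := by
      intro kk
      rw [Matrix.submatrix_mulVec_equiv]
      have h2 : P *ᵥ (w kk ∘ ⇑e.symm) = x kk := by rw [hx kk]; rfl
      rw [← Matrix.mulVec_mulVec, h2, Matrix.mulVec_mulVec]
    have hcompatA : ∀ kk, ((S * A * P).submatrix ⇑e ⇑e) *ᵥ (w kk)
        = (S *ᵥ (A *ᵥ x kk)) ∘ e := by
      intro kk
      rw [Matrix.submatrix_mulVec_equiv]
      have h2 : P *ᵥ (w kk ∘ ⇑e.symm) = x kk := by rw [hx kk]; rfl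
      rw [← Matrix.mulVec_mulVec, h2, Matrix.mulVec_mulVec]
    have hcompatB : ((S * B).submatrix ⇑e id) *ᵥ u k = ((S * B) *ᵥ u k) ∘ e := by
      rw [show (id : Fin m → Fin m) = ⇑(Equiv.refl (Fin m)) from rfl,
        Matrix.submatrix_mulVec_equiv]
      rfl
    have hcompatF : ((S * F).submatrix ⇑e id) *ᵥ η k = ((S * F) *ᵥ η k) ∘ e := by
      rw [show (id : Fin q → Fin q) = ⇑(Equiv.refl (Fin q)) from rfl,
        Matrix.submatrix_mulVec_equiv]
      rfl
    calc Matrix.fromBlocks 1 0 0 R *ᵥ (Sum.elim (z1 (k+1)) (z2 (k+1)))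
        = ((S * E * P).submatrix ⇑e ⇑e) *ᵥ (w (k+1)) := by rw [hE, hwz]
      _ = (S *ᵥ (E *ᵥ x (k+1))) ∘ e := hcompat _
      _ = (S *ᵥ (A *ᵥ x k)) ∘ e + (S *ᵥ (B *ᵥ u k)) ∘ e + (S *ᵥ (F *ᵥ η k)) ∘ e := by
          rw [htraj1 k, Matrix.mulVec_add, Matrix.mulVec_add]; rfl
      _ = Matrix.fromBlocks A1 0 0 1 *ᵥ (Sum.elim (z1 k) (z2 k))
          + Matrix.fromRows B1 B2 *ᵥ u k + Matrix.fromRows F1 F2 *ᵥ η k := by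
          rw [← hwz, ← hcompatA, ← hA]
          congr 1
          · congr 1
            rw [← hB, hcompatB]
            simp [Matrix.mulVec_mulVec]
          · rw [← hFdec, hcompatF]
            simp [Matrix.mulVec_mulVec]
  have hz1on : ∀ k, z1 (k+1) = A1 *ᵥ z1 k + B1 *ᵥ u k + F1 *ᵥ η k := by
    intro k
    funext i
    have hb := congrFun (hblock k) (Sum.inl i)
    simpa [Matrix.fromBlocks_mulVec, Matrix.fromRows_mulVec, Matrix.one_mulVec,
      Matrix.zero_mulVec] using hb
  have hz2on : ∀ k, R *ᵥ z2 (k+1) = z2 k + B2 *ᵥ u k + F2 *ᵥ η k := by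
    intro k
    funext i
    have hb := congrFun (hblock k) (Sum.inr i)
    simpa [Matrix.fromBlocks_mulVec, Matrix.fromRows_mulVec, Matrix.one_mulVec,
      Matrix.zero_mulVec] using hb
  have hz2iter : ∀ t k, z2 k = R ^ t *ᵥ z2 (k + t)
      - ∑ j ∈ Finset.range t, R ^ j *ᵥ (B2 *ᵥ u (k + j) + F2 *ᵥ η (k + j)) := by
    intro t
    induction t with
    | zero => intro k; simp
    | succ t ih =>
      intro k
      rw [ih k, Finset.sum_range_succ]
      have h2 : z2 (k + t) = R *ᵥ z2 (k + t + 1) - (B2 *ᵥ u (k+t) + F2 *ᵥ η (k+t)) := by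
        rw [hz2on (k+t)]; abel
      rw [h2, Matrix.mulVec_sub, Matrix.mulVec_mulVec, ← pow_succ, sub_sub,
        add_comm (R ^ t *ᵥ (B2 *ᵥ u (k + t) + F2 *ᵥ η (k + t)))]
      rfl
  have hz2form : ∀ k, z2 k
      = -(∑ j ∈ Finset.range s, R ^ j *ᵥ (B2 *ᵥ u (k + j) + F2 *ᵥ η (k + j))) := by
    intro k
    rw [hz2iter s k, hR, Matrix.zero_mulVec, zero_sub]
  -- persistent excitation gives surjectivity
  have hcard : Fintype.card (Fin n1 ⊕ (Fin (s+1) × (Fin m ⊕ Fin q))) = n1 + (s+1) * (m+q) := by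
    simp
  have hsurj : Function.Surjective
      (Matrix.of fun (i : Fin n1 ⊕ (Fin (s + 1) × (Fin m ⊕ Fin q))) (k : Fin T) =>
        Sum.elim (z1d (k : ℕ))
          (fun jl => Sum.elim (ud ((k : ℕ) + (jl.1 : ℕ))) (etad ((k : ℕ) + (jl.1 : ℕ))) jl.2)
          i).mulVecLin := by
    apply surj_of_rank_eq_card
    rw [hPE, hcard]
  -- the key one-step identity for the online trajectory
  have key : ∀ k, x (k+1) = SXp *ᵥ x k + SUp *ᵥ u k + SYp *ᵥ y k + SYf *ᵥ y (k+1) := by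
    intro k
    obtain ⟨g, hg⟩ := hsurj (fun i => Sum.elim (z1 k)
      (fun jl => Sum.elim (u (k + (jl.1 : ℕ))) (η (k + (jl.1 : ℕ))) jl.2) i)
    rw [Matrix.mulVecLin_apply] at hg
    have hgz1 : histMat T z1d 0 *ᵥ g = z1 k := by
      funext i
      have h := congrFun hg (Sum.inl i)
      simpa [histMat, Matrix.mulVec, dotProduct] using h
    have hgu : ∀ j, j < s + 1 → histMat T ud j *ᵥ g = u (k + j) := by
      intro j hj
      funext i
      have h := congrFun hg (Sum.inr (⟨j, hj⟩, Sum.inl i))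
      simpa [histMat, Matrix.mulVec, dotProduct] using h
    have hgeta : ∀ j, j < s + 1 → histMat T etad j *ᵥ g = η (k + j) := by
      intro j hj
      funext i
      have h := congrFun hg (Sum.inr (⟨j, hj⟩, Sum.inr i))
      simpa [histMat, Matrix.mulVec, dotProduct] using h
    have hUp : histMat T ud 0 *ᵥ g = u k := by
      have h := hgu 0 (by omega); simpa using h
    have heta0 : histMat T etad 0 *ᵥ g = η k := by
      have h := hgeta 0 (by omega); simpa using h
    have hgz2 : histMat T z2d 0 *ᵥ g = z2 k := by
      have hmat : histMat T z2d 0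
          = -(∑ j ∈ Finset.range s, R ^ j * (B2 * histMat T ud j + F2 * histMat T etad j)) := by
        have h1 : histMat T z2d 0 = histMat T (fun kk =>
            -(∑ j ∈ Finset.range s, R ^ j *ᵥ (B2 *ᵥ ud (kk + j) + F2 *ᵥ etad (kk + j)))) 0 :=
          histMat_congr fun t ht => hz2 (t + 0) (by omega)
        rw [h1, histMat_neg, histMat_sum]
        congr 1
      rw [hmat, Matrix.neg_mulVec, sum_mulVec', hz2form k]
      congr 1
      refine Finset.sum_congr rfl fun j hj => ?_
      have hjs : j < s + 1 := by
        rw [Finset.mem_range] at hj; omega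
      simp only [← Matrix.mulVec_mulVec, Matrix.add_mulVec]
      rw [hgu j hjs, hgeta j hjs]
    have hXp : histMat T xd 0 *ᵥ g = x k := by
      have hmat : histMat T xd 0
          = P * histMat T (fun kk i => Sum.elim (z1d kk) (z2d kk) (e.symm i)) 0 := by
        rw [← histMat_matrix]
        exact histMat_congr fun t ht => hxd (t + 0) (by omega)
      rw [hmat, ← Matrix.mulVec_mulVec]
      have helim : histMat T (fun kk i => Sum.elim (z1d kk) (z2d kk) (e.symm i)) 0 *ᵥ g
          = fun i => Sum.elim (z1 k) (z2 k) (e.symm i) := by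
        funext i
        rcases hsplit : e.symm i with a | a
        · have h := congrFun hgz1 a
          simp only [histMat, Matrix.mulVec, dotProduct, Matrix.of_apply] at h ⊢
          simpa [hsplit] using h
        · have h := congrFun hgz2 a
          simp only [histMat, Matrix.mulVec, dotProduct, Matrix.of_apply] at h ⊢
          simpa [hsplit] using h
      rw [helim]
      have h3 : (fun i => Sum.elim (z1 k) (z2 k) (e.symm i)) = fun i => w k (e.symm i) := by
        rw [hwz k]
      rw [h3, ← hx k]
    have hYp : histMat T yd 0 *ᵥ g = y k := by
      have hmat : histMat T yd 0 = C * histMat T xd 0 := by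
        rw [← histMat_matrix]
        exact histMat_congr fun t ht => hyd (t + 0) (by omega)
      rw [hmat, ← Matrix.mulVec_mulVec, hXp, ← htraj2 k]
    have hgz1f : histMat T z1d 1 *ᵥ g = z1 (k+1) := by
      have hmat : histMat T z1d 1
          = A1 * histMat T z1d 0 + B1 * histMat T ud 0 + F1 * histMat T etad 0 := by
        have h1 : histMat T z1d 1
            = histMat T (fun kk => A1 *ᵥ z1d kk + B1 *ᵥ ud kk + F1 *ᵥ etad kk) 0 :=
          histMat_congr fun t ht => by simpa using hz1 t ht
        rw [h1, histMat_add, histMat_add, histMat_matrix, histMat_matrix, histMat_matrix]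
      rw [hmat, Matrix.add_mulVec, Matrix.add_mulVec]
      simp only [← Matrix.mulVec_mulVec]
      rw [hgz1, hUp, heta0]
      exact (hz1on k).symm
    have hgz2f : histMat T z2d 1 *ᵥ g = z2 (k+1) := by
      have h1 : histMat T z2d 1 = histMat T (fun kk =>
          -(∑ j ∈ Finset.range s, R ^ j *ᵥ (B2 *ᵥ ud (kk + (j+1)) + F2 *ᵥ etad (kk + (j+1))))) 0 := by
        apply histMat_congr
        intro t ht
        rw [hz2 (t+1) (by omega)]
        simp only [Nat.add_zero]
        congr 1
        refine Finset.sum_congr rfl fun j hj => ?_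
        rw [show t + 1 + j = t + (j + 1) from by omega]
      rw [h1, histMat_neg, histMat_sum, Matrix.neg_mulVec, sum_mulVec', hz2form (k+1)]
      congr 1
      refine Finset.sum_congr rfl fun j hj => ?_
      have hjs : j + 1 < s + 1 := by
        rw [Finset.mem_range] at hj; omega
      rw [histMat_matrix, histMat_add, histMat_matrix, histMat_matrix,
        histMat_shift, histMat_shift, zero_add]
      simp only [← Matrix.mulVec_mulVec, Matrix.add_mulVec]
      rw [hgu (j+1) hjs, hgeta (j+1) hjs,
        show k + (j + 1) = k + 1 + j from by omega]
    have hXf : histMat T xd 1 *ᵥ g = x (k+1) := by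
      have hmat : histMat T xd 1
          = P * histMat T (fun kk i => Sum.elim (z1d kk) (z2d kk) (e.symm i)) 1 := by
        rw [← histMat_matrix]
        exact histMat_congr fun t ht => hxd (t + 1) (by omega)
      rw [hmat, ← Matrix.mulVec_mulVec]
      have helim : histMat T (fun kk i => Sum.elim (z1d kk) (z2d kk) (e.symm i)) 1 *ᵥ g
          = fun i => Sum.elim (z1 (k+1)) (z2 (k+1)) (e.symm i) := by
        funext i
        rcases hsplit : e.symm i with a | a
        · have h := congrFun hgz1f a
          simp only [histMat, Matrix.mulVec, dotProduct, Matrix.of_apply] at h ⊢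
          simpa [hsplit] using h
        · have h := congrFun hgz2f a
          simp only [histMat, Matrix.mulVec, dotProduct, Matrix.of_apply] at h ⊢
          simpa [hsplit] using h
      rw [helim]
      have h3 : (fun i => Sum.elim (z1 (k+1)) (z2 (k+1)) (e.symm i))
          = fun i => w (k+1) (e.symm i) := by
        rw [hwz (k+1)]
      rw [h3, ← hx (k+1)]
    have hYf : histMat T yd 1 *ᵥ g = y (k+1) := by
      have hmat : histMat T yd 1 = C * histMat T xd 1 := by
        rw [← histMat_matrix]
        exact histMat_congr fun t ht => hyd (t + 1) (by omega)
      rw [hmat, ← Matrix.mulVec_mulVec, hXf, ← htraj2 (k+1)]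
    have hcomb := congrArg (fun M => M *ᵥ g) hSig
    simp only [Matrix.add_mulVec] at hcomb
    simp only [← Matrix.mulVec_mulVec] at hcomb
    rw [hXp, hUp, hYp, hXf, hYf] at hcomb
    exact hcomb
  -- error dynamics and convergence
  have herr : ∀ k, x (k+1) - xhat (k+1) = SXp *ᵥ (x k - xhat k) := by
    intro k
    rw [key k, hobs k, Matrix.mulVec_sub]
    abel
  have hiter : ∀ k, x k - xhat k = SXp ^ k *ᵥ (x 0 - xhat 0) := by
    intro k
    induction k with
    | zero => simp [Matrix.one_mulVec]
    | succ k ih => rw [herr k, ih, Matrix.mulVec_mulVec, ← pow_succ']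
  have hnorm := schur_norm_pow_tendsto SXp hSchur
  apply squeeze_zero (fun k => norm_nonneg _)
    (g := fun k => ‖SXp ^ k‖ * ‖x 0 - xhat 0‖)
    (fun k => by rw [hiter k]; exact Matrix.linfty_opNorm_mulVec _ _)
  simpa using hnorm.mul_const ‖x 0 - xhat 0‖

end Schur
end
end

section
/- Let E ∈ ℝ^{n×n}, C ∈ ℝ^{p×n}, and F ∈ ℝ^{n×q} with rank(F) = q. If the (n+p) × (n+q) block matrix [[E, F], [C, 0]] has rank n + q, then there exist matrices T̄ ∈ ℝ^{n×n} and N̄ ∈ ℝ^{n×p} such that T̄·E + N̄·C = I_n and T̄·F = 0. -/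
open Matrix

noncomputable section

theorem stmt_13 (n p q : ℕ)
    (E : Matrix (Fin n) (Fin n) ℝ) (C : Matrix (Fin p) (Fin n) ℝ)
    (F : Matrix (Fin n) (Fin q) ℝ) (hF : F.rank = q)
    (hblk : (Matrix.fromBlocks E F C 0).rank = n + q) :
    ∃ (Tbar : Matrix (Fin n) (Fin n) ℝ) (Nbar : Matrix (Fin n) (Fin p) ℝ),
      Tbar * E + Nbar * C = 1 ∧ Tbar * F = 0 := by
  set M := Matrix.fromBlocks E F C 0 with hM
  -- The Gram matrix Mᵀ * M is invertible since M has full column rank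
  have hG : (Mᵀ * M).rank = n + q := by
    rw [Matrix.rank_transpose_mul_self, hblk]
  have hunit : IsUnit (Mᵀ * M) := by
    rw [← Matrix.mulVec_surjective_iff_isUnit]
    have htop : LinearMap.range (Mᵀ * M).mulVecLin = ⊤ := by
      apply Submodule.eq_top_of_finrank_eq
      rw [← Matrix.rank, hG]
      simp [Module.finrank_pi]
    exact LinearMap.range_eq_top.mp htop
  obtain ⟨G, hGinv⟩ := hunit.exists_left_inv
  set L := G * Mᵀ with hL
  have hLM : L * M = 1 := by
    rw [hL, Matrix.mul_assoc, hGinv]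
  -- decompose L into blocks
  rw [← Matrix.fromBlocks_toBlocks L, hM, Matrix.fromBlocks_multiply] at hLM
  rw [← Matrix.fromBlocks_one] at hLM
  refine ⟨L.toBlocks₁₁, L.toBlocks₁₂, ?_, ?_⟩
  · have := congrArg Matrix.toBlocks₁₁ hLM
    simpa only [Matrix.toBlocks_fromBlocks₁₁, Matrix.mul_zero, add_zero] using this
  · have := congrArg Matrix.toBlocks₁₂ hLM
    simpa only [Matrix.toBlocks_fromBlocks₁₂, Matrix.mul_zero, add_zero] using this
end
end

section
/- Let E, A ∈ ℝ^{n×n}, B ∈ ℝ^{n×m}, F ∈ ℝ^{n×q} with rank(F) = q, and C ∈ ℝ^{p×n}, and assume the (n+p) × (n+q) block matrix [[E, F], [C, 0]] has rank n + q. Then, for historical data generated by the unknown-input descriptor system, every g ∈ ℝ^T with X_p·g = 0, U_p·g = 0 and Y_f·g = 0 satisfies X_f·g = 0. -/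
open Matrix

noncomputable section

lemma hist_mulVec {ι : Type} (T : ℕ) (f : ℕ → ι → ℝ) (off : ℕ) (g : Fin T → ℝ) :
    histMat T f off *ᵥ g = ∑ k : Fin T, g k • f ((k : ℕ) + off) := by
  ext i
  simp [histMat, Matrix.mulVec, dotProduct, mul_comm]

lemma full_col_rank_injective {a b : Type} [Fintype a] [Fintype b] [DecidableEq b]
    (M : Matrix a b ℝ) (h : M.rank = Fintype.card b) :
    Function.Injective M.mulVecLin := by
  rw [← LinearMap.ker_eq_bot]
  have hrn := M.mulVecLin.finrank_range_add_finrank_ker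
  rw [Matrix.rank] at h
  have : Module.finrank ℝ (b → ℝ) = Fintype.card b := Module.finrank_fintype_fun_eq_card ℝ
  rw [this, h] at hrn
  have hker : Module.finrank ℝ (LinearMap.ker M.mulVecLin) = 0 := by omega
  exact Submodule.finrank_eq_zero.mp hker

theorem stmt_14 (n m p q T : ℕ) (hT : 1 ≤ T)
    (E A : Matrix (Fin n) (Fin n) ℝ) (B : Matrix (Fin n) (Fin m) ℝ)
    (F : Matrix (Fin n) (Fin q) ℝ) (hF : F.rank = q)
    (C : Matrix (Fin p) (Fin n) ℝ)
    (hblk : (Matrix.fromBlocks E F C 0).rank = n + q)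
    (xd : ℕ → Fin n → ℝ) (ud : ℕ → Fin m → ℝ) (etad : ℕ → Fin q → ℝ)
    (yd : ℕ → Fin p → ℝ)
    (hdyn : ∀ k < T, E *ᵥ xd (k + 1) = A *ᵥ xd k + B *ᵥ ud k + F *ᵥ etad k)
    (hyd : ∀ k ≤ T, yd k = C *ᵥ xd k) :
    ∀ g : Fin T → ℝ, histMat T xd 0 *ᵥ g = 0 → histMat T ud 0 *ᵥ g = 0 →
      histMat T yd 1 *ᵥ g = 0 → histMat T xd 1 *ᵥ g = 0 := by
  intro g hXp hUp hYf
  set v : Fin n → ℝ := histMat T xd 1 *ᵥ g with hv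
  set w : Fin q → ℝ := histMat T etad 0 *ᵥ g with hw
  -- E v = F w
  have hEv : E *ᵥ v = F *ᵥ w := by
    have h1 : E *ᵥ v = ∑ k : Fin T, g k • (E *ᵥ xd ((k : ℕ) + 1)) := by
      rw [hv, hist_mulVec]
      rw [show (E *ᵥ ∑ k : Fin T, g k • xd ((k : ℕ) + 1))
          = E.mulVecLin (∑ k : Fin T, g k • xd ((k : ℕ) + 1)) from rfl,
        map_sum]
      simp
    rw [h1]
    have h2 : ∀ k : Fin T, g k • (E *ᵥ xd ((k : ℕ) + 1))
        = g k • (A *ᵥ xd (k : ℕ)) + g k • (B *ᵥ ud (k : ℕ)) + g k • (F *ᵥ etad (k : ℕ)) := by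
      intro k
      rw [hdyn (k : ℕ) k.isLt]
      module
    rw [Finset.sum_congr rfl (fun k _ => h2 k), Finset.sum_add_distrib, Finset.sum_add_distrib]
    have hA : ∑ k : Fin T, g k • (A *ᵥ xd (k : ℕ)) = A *ᵥ (histMat T xd 0 *ᵥ g) := by
      rw [hist_mulVec,
        show (A *ᵥ ∑ k : Fin T, g k • xd ((k : ℕ) + 0))
          = A.mulVecLin (∑ k : Fin T, g k • xd ((k : ℕ) + 0)) from rfl, map_sum]
      simp
    have hB : ∑ k : Fin T, g k • (B *ᵥ ud (k : ℕ)) = B *ᵥ (histMat T ud 0 *ᵥ g) := by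
      rw [hist_mulVec,
        show (B *ᵥ ∑ k : Fin T, g k • ud ((k : ℕ) + 0))
          = B.mulVecLin (∑ k : Fin T, g k • ud ((k : ℕ) + 0)) from rfl, map_sum]
      simp
    have hFw : ∑ k : Fin T, g k • (F *ᵥ etad (k : ℕ)) = F *ᵥ w := by
      rw [hw, hist_mulVec,
        show (F *ᵥ ∑ k : Fin T, g k • etad ((k : ℕ) + 0))
          = F.mulVecLin (∑ k : Fin T, g k • etad ((k : ℕ) + 0)) from rfl, map_sum]
      simp
    rw [hA, hB, hFw, hXp, hUp]
    simp
  -- C v = 0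
  have hCv : C *ᵥ v = 0 := by
    have h1 : C *ᵥ v = ∑ k : Fin T, g k • (C *ᵥ xd ((k : ℕ) + 1)) := by
      rw [hv, hist_mulVec,
        show (C *ᵥ ∑ k : Fin T, g k • xd ((k : ℕ) + 1))
          = C.mulVecLin (∑ k : Fin T, g k • xd ((k : ℕ) + 1)) from rfl, map_sum]
      simp
    have h2 : ∀ k : Fin T, C *ᵥ xd ((k : ℕ) + 1) = yd ((k : ℕ) + 1) := by
      intro k
      rw [hyd ((k : ℕ) + 1) (by omega)]
    rw [h1]
    rw [Finset.sum_congr rfl (fun k _ => by rw [h2 k])]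
    rw [← hist_mulVec, hYf]
  -- block kernel
  have hker : (Matrix.fromBlocks E F C 0) *ᵥ (Sum.elim v (-w)) = 0 := by
    rw [Matrix.fromBlocks_mulVec]
    simp only [Sum.elim_comp_inl, Sum.elim_comp_inr, Matrix.mulVec_neg, hEv, hCv,
      Matrix.zero_mulVec, add_neg_cancel, add_zero, zero_add]
    ext (i | j) <;> simp
  have hinj := full_col_rank_injective (Matrix.fromBlocks E F C 0)
    (by simpa using hblk)
  have h0 : Sum.elim v (-w) = 0 := by
    apply hinj
    simpa using hker
  ext i
  have := congrFun h0 (Sum.inl i)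
  simpa using this
end
end

section
/- Assume the unknown-input Weierstrass decomposition hypothesis. Then the rank of the (n+p) × (n+q) block matrix [[E, F], [C, 0]] equals n1 + rank of the (n2+p) × (n2+q) block matrix [[R, F2], [C2, −C1·F1]]. -/
open Matrix

noncomputable section

/-- Rank is invariant under reindexing, rectangular version. -/
lemma aux_rank_submatrix {l l' m m' : Type*} [Fintype m] [Fintype m']
    (A : Matrix l m ℝ) (e₁ : l' ≃ l) (e₂ : m' ≃ m) :
    (A.submatrix ⇑e₁ ⇑e₂).rank = A.rank := by
  have : A.submatrix ⇑e₁ ⇑e₂ = Matrix.reindex e₁.symm e₂.symm A := by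
    simp [Matrix.reindex_apply]
  rw [this, Matrix.rank, Matrix.rank, Matrix.mulVecLin_reindex, LinearMap.range_comp,
    LinearMap.range_comp, LinearEquiv.range, Submodule.map_top, LinearEquiv.finrank_map_eq]

lemma aux_range_prodMap {R M N M' N' : Type*} [CommRing R]
    [AddCommGroup M] [AddCommGroup N] [AddCommGroup M'] [AddCommGroup N']
    [Module R M] [Module R N] [Module R M'] [Module R N']
    (f : M →ₗ[R] M') (g : N →ₗ[R] N') :
    LinearMap.range (f.prodMap g) = (LinearMap.range f).prod (LinearMap.range g) := by
  ext ⟨a, b⟩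
  constructor
  · rintro ⟨⟨x, y⟩, h⟩
    simp only [LinearMap.prodMap_apply, Prod.mk.injEq] at h
    exact ⟨⟨x, h.1⟩, ⟨y, h.2⟩⟩
  · rintro ⟨⟨x, hx⟩, ⟨y, hy⟩⟩
    exact ⟨(x, y), by simp [hx, hy]⟩

set_option maxHeartbeats 1000000 in
lemma aux_finrank_prod {K M N : Type*} [Field K] [AddCommGroup M] [AddCommGroup N]
    [Module K M] [Module K N] [FiniteDimensional K M] [FiniteDimensional K N]
    (p : Submodule K M) (q : Submodule K N) :
    Module.finrank K (p.prod q) = Module.finrank K p + Module.finrank K q := by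
  rw [LinearMap.prod_eq_sup_map]
  have hdisj : Disjoint (p.map (LinearMap.inl K M N)) (q.map (LinearMap.inr K M N)) := by
    refine Disjoint.mono ?_ ?_ LinearMap.disjoint_inl_inr
    · exact (LinearMap.map_le_range)
    · exact (LinearMap.map_le_range)
  have h := Submodule.finrank_sup_add_finrank_inf_eq
    (p.map (LinearMap.inl K M N)) (q.map (LinearMap.inr K M N))
  rw [hdisj.eq_bot, finrank_bot, add_zero] at h
  rw [h,
    (Submodule.equivMapOfInjective (LinearMap.inl K M N) LinearMap.inl_injective p).finrank_eq.symm,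
    (Submodule.equivMapOfInjective (LinearMap.inr K M N) LinearMap.inr_injective q).finrank_eq.symm]

/-- Rank of a block diagonal matrix is the sum of the ranks. -/
lemma aux_rank_fromBlocks_diag {α β γ δ : Type*} [Fintype α] [Fintype β] [Fintype γ] [Fintype δ]
    (A : Matrix α γ ℝ) (D : Matrix β δ ℝ) :
    (Matrix.fromBlocks A 0 0 D).rank = A.rank + D.rank := by
  classical
  let e₁ : ((α ⊕ β) → ℝ) ≃ₗ[ℝ] (α → ℝ) × (β → ℝ) := LinearEquiv.sumArrowLequivProdArrow α β ℝ ℝ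
  let e₂ : ((γ ⊕ δ) → ℝ) ≃ₗ[ℝ] (γ → ℝ) × (δ → ℝ) := LinearEquiv.sumArrowLequivProdArrow γ δ ℝ ℝ
  have key : (Matrix.fromBlocks A 0 0 D).mulVecLin
      = e₁.symm.toLinearMap ∘ₗ (A.mulVecLin.prodMap D.mulVecLin) ∘ₗ e₂.toLinearMap := by
    apply LinearMap.ext
    intro x
    funext i
    cases i with
    | inl i =>
      simp [Matrix.mulVecLin_apply, Matrix.fromBlocks_mulVec, e₁, e₂,
        LinearEquiv.sumArrowLequivProdArrow, Equiv.sumArrowEquivProdArrow]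
    | inr i =>
      simp [Matrix.mulVecLin_apply, Matrix.fromBlocks_mulVec, e₁, e₂,
        LinearEquiv.sumArrowLequivProdArrow, Equiv.sumArrowEquivProdArrow]
  rw [Matrix.rank, key, LinearMap.range_comp, LinearMap.range_comp, LinearEquiv.range,
    Submodule.map_top, LinearEquiv.finrank_map_eq, aux_range_prodMap, aux_finrank_prod]
  rfl

theorem stmt_15 (n1 n2 s m p q : ℕ) (hs : 1 ≤ s)
    (E A : Matrix (Fin (n1 + n2)) (Fin (n1 + n2)) ℝ)
    (B : Matrix (Fin (n1 + n2)) (Fin m) ℝ)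
    (F : Matrix (Fin (n1 + n2)) (Fin q) ℝ) (hF : F.rank = q)
    (C : Matrix (Fin p) (Fin (n1 + n2)) ℝ)
    (S P : Matrix (Fin (n1 + n2)) (Fin (n1 + n2)) ℝ)
    (hS : IsUnit S) (hP : IsUnit P)
    (A1 : Matrix (Fin n1) (Fin n1) ℝ) (R : Matrix (Fin n2) (Fin n2) ℝ)
    (B1 : Matrix (Fin n1) (Fin m) ℝ) (B2 : Matrix (Fin n2) (Fin m) ℝ)
    (F1 : Matrix (Fin n1) (Fin q) ℝ) (F2 : Matrix (Fin n2) (Fin q) ℝ)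
    (C1 : Matrix (Fin p) (Fin n1) ℝ) (C2 : Matrix (Fin p) (Fin n2) ℝ)
    (hR : R ^ s = 0)
    (hE : (S * E * P).submatrix ⇑finSumFinEquiv ⇑finSumFinEquiv = Matrix.fromBlocks 1 0 0 R)
    (hA : (S * A * P).submatrix ⇑finSumFinEquiv ⇑finSumFinEquiv = Matrix.fromBlocks A1 0 0 1)
    (hB : (S * B).submatrix ⇑finSumFinEquiv id = Matrix.fromRows B1 B2)
    (hFdec : (S * F).submatrix ⇑finSumFinEquiv id = Matrix.fromRows F1 F2)
    (hC : (C * P).submatrix id ⇑finSumFinEquiv = Matrix.fromCols C1 C2)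
    :
    (Matrix.fromBlocks E F C 0).rank
      = n1 + (Matrix.fromBlocks R F2 C2 (-(C1 * F1))).rank := by
  classical
  have hSdet : IsUnit S.det := (Matrix.isUnit_iff_isUnit_det S).mp hS
  have hPdet : IsUnit P.det := (Matrix.isUnit_iff_isUnit_det P).mp hP
  -- Step A: multiply by diag(S,1) on the left and diag(P,1) on the right
  have e1 : Matrix.fromBlocks S 0 0 (1 : Matrix (Fin p) (Fin p) ℝ)
        * Matrix.fromBlocks E F C 0
        * Matrix.fromBlocks P 0 0 (1 : Matrix (Fin q) (Fin q) ℝ)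
      = Matrix.fromBlocks (S * E * P) (S * F) (C * P) 0 := by
    rw [Matrix.fromBlocks_multiply, Matrix.fromBlocks_multiply]
    simp [Matrix.mul_assoc]
  have hLdet : IsUnit (Matrix.fromBlocks S 0 0 (1 : Matrix (Fin p) (Fin p) ℝ)).det := by
    rw [Matrix.det_fromBlocks_zero₂₁]
    simpa using hSdet
  have hRdet : IsUnit (Matrix.fromBlocks P 0 0 (1 : Matrix (Fin q) (Fin q) ℝ)).det := by
    rw [Matrix.det_fromBlocks_zero₂₁]
    simpa using hPdet
  have stepA : (Matrix.fromBlocks E F C 0).rank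
      = (Matrix.fromBlocks (S * E * P) (S * F) (C * P)
          (0 : Matrix (Fin p) (Fin q) ℝ)).rank := by
    rw [← e1, Matrix.rank_mul_eq_left_of_isUnit_det _ _ hRdet,
      Matrix.rank_mul_eq_right_of_isUnit_det _ _ hLdet]
  -- Step B: reindex into Weierstrass coordinates
  set eR : (Fin n1 ⊕ Fin n2) ⊕ Fin p ≃ Fin (n1 + n2) ⊕ Fin p :=
    Equiv.sumCongr finSumFinEquiv (Equiv.refl (Fin p)) with heR
  set eC : (Fin n1 ⊕ Fin n2) ⊕ Fin q ≃ Fin (n1 + n2) ⊕ Fin q :=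
    Equiv.sumCongr finSumFinEquiv (Equiv.refl (Fin q)) with heC
  set M₁ : Matrix ((Fin n1 ⊕ Fin n2) ⊕ Fin p) ((Fin n1 ⊕ Fin n2) ⊕ Fin q) ℝ :=
    Matrix.fromBlocks (Matrix.fromBlocks 1 0 0 R) (Matrix.fromRows F1 F2)
      (Matrix.fromCols C1 C2) 0 with hM₁def
  have hM₁ : (Matrix.fromBlocks (S * E * P) (S * F) (C * P)
      (0 : Matrix (Fin p) (Fin q) ℝ)).submatrix ⇑eR ⇑eC = M₁ := by
    rw [hM₁def, ← hE, ← hFdec, ← hC]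
    ext i j
    rcases i with (i | i) | i <;> rcases j with (j | j) | j <;>
      simp [eR, eC, Matrix.fromBlocks, Matrix.fromRows, Matrix.fromCols]
  have stepB : (Matrix.fromBlocks (S * E * P) (S * F) (C * P)
      (0 : Matrix (Fin p) (Fin q) ℝ)).rank = M₁.rank := by
    rw [← hM₁, aux_rank_submatrix]
  -- Step C: row and column operations
  set L : Matrix ((Fin n1 ⊕ Fin n2) ⊕ Fin p) ((Fin n1 ⊕ Fin n2) ⊕ Fin p) ℝ :=
    Matrix.fromBlocks 1 0 (Matrix.fromCols (-C1) 0) 1 with hLdef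
  set U : Matrix ((Fin n1 ⊕ Fin n2) ⊕ Fin q) ((Fin n1 ⊕ Fin n2) ⊕ Fin q) ℝ :=
    Matrix.fromBlocks 1 (Matrix.fromRows (-F1) 0) 0 1 with hUdef
  have hLu : IsUnit L.det := by
    rw [hLdef, Matrix.det_fromBlocks_zero₁₂]
    simp
  have hUu : IsUnit U.det := by
    rw [hUdef, Matrix.det_fromBlocks_zero₂₁]
    simp
  set M₃ : Matrix ((Fin n1 ⊕ Fin n2) ⊕ Fin p) ((Fin n1 ⊕ Fin n2) ⊕ Fin q) ℝ :=
    Matrix.fromBlocks (Matrix.fromBlocks 1 0 0 R) (Matrix.fromRows 0 F2)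
      (Matrix.fromCols 0 C2) (-(C1 * F1)) with hM₃def
  have stepC : L * M₁ * U = M₃ := by
    rw [hLdef, hUdef, hM₁def, hM₃def, Matrix.fromBlocks_multiply, Matrix.fromBlocks_multiply]
    ext i j
    rcases i with (i | i) | i <;> rcases j with (j | j) | j <;>
      simp [Matrix.fromBlocks, Matrix.fromCols, Matrix.mul_apply,
        Matrix.one_apply, Fintype.sum_sum_type, Finset.sum_add_distrib, neg_mul, mul_ite,
        ite_mul, Finset.sum_ite_eq, Finset.sum_ite_eq']
  have stepC' : M₁.rank = M₃.rank := by
    rw [← stepC, Matrix.rank_mul_eq_left_of_isUnit_det _ _ hUu,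
      Matrix.rank_mul_eq_right_of_isUnit_det _ _ hLu]
  -- Step D: reassociate the sums
  set aR : Fin n1 ⊕ (Fin n2 ⊕ Fin p) ≃ (Fin n1 ⊕ Fin n2) ⊕ Fin p :=
    (Equiv.sumAssoc (Fin n1) (Fin n2) (Fin p)).symm
  set aC : Fin n1 ⊕ (Fin n2 ⊕ Fin q) ≃ (Fin n1 ⊕ Fin n2) ⊕ Fin q :=
    (Equiv.sumAssoc (Fin n1) (Fin n2) (Fin q)).symm
  have hM₄ : M₃.submatrix ⇑aR ⇑aC
      = Matrix.fromBlocks 1 0 0 (Matrix.fromBlocks R F2 C2 (-(C1 * F1))) := by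
    rw [hM₃def]
    ext i j
    rcases i with i | (i | i) <;> rcases j with j | (j | j) <;>
      simp [aR, aC, Equiv.sumAssoc, Matrix.fromBlocks, Matrix.fromCols]
  have stepD : M₃.rank
      = (Matrix.fromBlocks (1 : Matrix (Fin n1) (Fin n1) ℝ) 0 0
          (Matrix.fromBlocks R F2 C2 (-(C1 * F1)))).rank := by
    rw [← hM₄, aux_rank_submatrix]
  rw [stepA, stepB, stepC', stepD, aux_rank_fromBlocks_diag, Matrix.rank_one,
    Fintype.card_fin]
end
end

section
/- Assume the unknown-input Weierstrass decomposition and unknown-input historical data hypotheses. If rank col(X_p, U_p, Y_f) = n + m + q, then the (n+p) × (n+q) block matrix [[E, F], [C, 0]] has rank n + q. -/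
open Matrix

noncomputable section

/-- Combine two linear maps into one with sum codomain index. -/
def elimL {W : Type*} [AddCommMonoid W] [Module ℝ W] {α β : Type*}
    (f : W →ₗ[ℝ] (α → ℝ)) (g : W →ₗ[ℝ] (β → ℝ)) : W →ₗ[ℝ] (α ⊕ β → ℝ) :=
  (LinearEquiv.sumArrowLequivProdArrow α β ℝ ℝ).symm.toLinearMap.comp (f.prod g)

@[simp] lemma elimL_apply {W : Type*} [AddCommMonoid W] [Module ℝ W] {α β : Type*}
    (f : W →ₗ[ℝ] (α → ℝ)) (g : W →ₗ[ℝ] (β → ℝ)) (w : W) :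
    elimL f g w = Sum.elim (f w) (g w) := by
  funext x; cases x <;> rfl

/-- The one-step map underlying the data matrix columns. -/
def obsMap {n1 n2 m p q : ℕ} (P : Matrix (Fin (n1 + n2)) (Fin (n1 + n2)) ℝ)
    (C : Matrix (Fin p) (Fin (n1 + n2)) ℝ)
    (A1 : Matrix (Fin n1) (Fin n1) ℝ) (R : Matrix (Fin n2) (Fin n2) ℝ)
    (B1 : Matrix (Fin n1) (Fin m) ℝ) (B2 : Matrix (Fin n2) (Fin m) ℝ)
    (F1 : Matrix (Fin n1) (Fin q) ℝ) (F2 : Matrix (Fin n2) (Fin q) ℝ) :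
    (((Fin n1 ⊕ Fin m) ⊕ (Fin n2 ⊕ Fin q)) → ℝ) →ₗ[ℝ]
      ((Fin (n1 + n2) ⊕ (Fin m ⊕ Fin p)) → ℝ) :=
  let pz1 := LinearMap.funLeft ℝ ℝ
    ((Sum.inl ∘ Sum.inl : Fin n1 → (Fin n1 ⊕ Fin m) ⊕ (Fin n2 ⊕ Fin q)))
  let pu := LinearMap.funLeft ℝ ℝ
    ((Sum.inl ∘ Sum.inr : Fin m → (Fin n1 ⊕ Fin m) ⊕ (Fin n2 ⊕ Fin q)))
  let pz2 := LinearMap.funLeft ℝ ℝ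
    ((Sum.inr ∘ Sum.inl : Fin n2 → (Fin n1 ⊕ Fin m) ⊕ (Fin n2 ⊕ Fin q)))
  let pet := LinearMap.funLeft ℝ ℝ
    ((Sum.inr ∘ Sum.inr : Fin q → (Fin n1 ⊕ Fin m) ⊕ (Fin n2 ⊕ Fin q)))
  let reidx : ((Fin n1 ⊕ Fin n2) → ℝ) →ₗ[ℝ] (Fin (n1 + n2) → ℝ) :=
    LinearMap.funLeft ℝ ℝ ⇑finSumFinEquiv.symm
  elimL (P.mulVecLin ∘ₗ reidx ∘ₗ elimL pz1
      (R.mulVecLin ∘ₗ pz2 - B2.mulVecLin ∘ₗ pu - F2.mulVecLin ∘ₗ pet))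
    (elimL pu (C.mulVecLin ∘ₗ P.mulVecLin ∘ₗ reidx ∘ₗ elimL
      (A1.mulVecLin ∘ₗ pz1 + B1.mulVecLin ∘ₗ pu + F1.mulVecLin ∘ₗ pet) pz2))

lemma obsMap_apply {n1 n2 m p q : ℕ} (P : Matrix (Fin (n1 + n2)) (Fin (n1 + n2)) ℝ)
    (C : Matrix (Fin p) (Fin (n1 + n2)) ℝ)
    (A1 : Matrix (Fin n1) (Fin n1) ℝ) (R : Matrix (Fin n2) (Fin n2) ℝ)
    (B1 : Matrix (Fin n1) (Fin m) ℝ) (B2 : Matrix (Fin n2) (Fin m) ℝ)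
    (F1 : Matrix (Fin n1) (Fin q) ℝ) (F2 : Matrix (Fin n2) (Fin q) ℝ)
    (a : Fin n1 → ℝ) (b : Fin m → ℝ) (c : Fin n2 → ℝ) (d : Fin q → ℝ) :
    obsMap P C A1 R B1 B2 F1 F2 (Sum.elim (Sum.elim a b) (Sum.elim c d)) =
      Sum.elim
        (P *ᵥ fun i => (Sum.elim a (R *ᵥ c - B2 *ᵥ b - F2 *ᵥ d)) (finSumFinEquiv.symm i))
        (Sum.elim b
          (C *ᵥ (P *ᵥ fun i =>
            (Sum.elim (A1 *ᵥ a + B1 *ᵥ b + F1 *ᵥ d) c) (finSumFinEquiv.symm i)))) := by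
  funext x
  cases x <;> rfl

theorem stmt_17 (n1 n2 s m p q T : ℕ) (hs : 1 ≤ s) (hT : 1 ≤ T)
    (E A : Matrix (Fin (n1 + n2)) (Fin (n1 + n2)) ℝ)
    (B : Matrix (Fin (n1 + n2)) (Fin m) ℝ)
    (F : Matrix (Fin (n1 + n2)) (Fin q) ℝ) (hF : F.rank = q)
    (C : Matrix (Fin p) (Fin (n1 + n2)) ℝ)
    (S P : Matrix (Fin (n1 + n2)) (Fin (n1 + n2)) ℝ)
    (hS : IsUnit S) (hP : IsUnit P)
    (A1 : Matrix (Fin n1) (Fin n1) ℝ) (R : Matrix (Fin n2) (Fin n2) ℝ)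
    (B1 : Matrix (Fin n1) (Fin m) ℝ) (B2 : Matrix (Fin n2) (Fin m) ℝ)
    (F1 : Matrix (Fin n1) (Fin q) ℝ) (F2 : Matrix (Fin n2) (Fin q) ℝ)
    (C1 : Matrix (Fin p) (Fin n1) ℝ) (C2 : Matrix (Fin p) (Fin n2) ℝ)
    (hR : R ^ s = 0)
    (hE : (S * E * P).submatrix ⇑finSumFinEquiv ⇑finSumFinEquiv = Matrix.fromBlocks 1 0 0 R)
    (hA : (S * A * P).submatrix ⇑finSumFinEquiv ⇑finSumFinEquiv = Matrix.fromBlocks A1 0 0 1)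
    (hB : (S * B).submatrix ⇑finSumFinEquiv id = Matrix.fromRows B1 B2)
    (hFdec : (S * F).submatrix ⇑finSumFinEquiv id = Matrix.fromRows F1 F2)
    (hC : (C * P).submatrix id ⇑finSumFinEquiv = Matrix.fromCols C1 C2)
    (ud : ℕ → Fin m → ℝ) (etad : ℕ → Fin q → ℝ)
    (z1d : ℕ → Fin n1 → ℝ) (z2d : ℕ → Fin n2 → ℝ)
    (xd : ℕ → Fin (n1 + n2) → ℝ) (yd : ℕ → Fin p → ℝ)
    (hz1 : ∀ k < T, z1d (k + 1) = A1 *ᵥ z1d k + B1 *ᵥ ud k + F1 *ᵥ etad k)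
    (hz2 : ∀ k ≤ T, z2d k
      = -(∑ j ∈ Finset.range s, (R ^ j *ᵥ (B2 *ᵥ ud (k + j) + F2 *ᵥ etad (k + j)))))
    (hxd : ∀ k ≤ T, xd k = P *ᵥ (fun i => Sum.elim (z1d k) (z2d k) (finSumFinEquiv.symm i)))
    (hyd : ∀ k ≤ T, yd k = C *ᵥ xd k)
    (hrk : (Matrix.fromRows (histMat T xd 0)
      (Matrix.fromRows (histMat T ud 0) (histMat T yd 1))).rank = (n1 + n2) + m + q) :
    (Matrix.fromBlocks E F C 0).rank = (n1 + n2) + q := by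
  classical
  set D := Matrix.fromRows (histMat T xd 0)
      (Matrix.fromRows (histMat T ud 0) (histMat T yd 1)) with hD
  set L := obsMap (p := p) P C A1 R B1 B2 F1 F2 with hL
  -- the backwards recursion for the fast state
  have z2rec : ∀ k, k < T → z2d k = R *ᵥ z2d (k + 1) - B2 *ᵥ ud k - F2 *ᵥ etad k := by
    intro k hk
    obtain ⟨s', rfl⟩ : ∃ s', s = s' + 1 := ⟨s - 1, by omega⟩
    have hsum : R *ᵥ (∑ j ∈ Finset.range (s' + 1),
        R ^ j *ᵥ (B2 *ᵥ ud (k + 1 + j) + F2 *ᵥ etad (k + 1 + j)))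
        = ∑ j ∈ Finset.range s',
            R ^ (j + 1) *ᵥ (B2 *ᵥ ud (k + (j + 1)) + F2 *ᵥ etad (k + (j + 1))) := by
      have hms := map_sum R.mulVecLin
        (fun j => R ^ j *ᵥ (B2 *ᵥ ud (k + 1 + j) + F2 *ᵥ etad (k + 1 + j)))
        (Finset.range (s' + 1))
      simp only [Matrix.mulVecLin_apply] at hms
      rw [hms, Finset.sum_range_succ]
      have hz : R *ᵥ (R ^ s' *ᵥ (B2 *ᵥ ud (k + 1 + s') + F2 *ᵥ etad (k + 1 + s'))) = 0 := by
        rw [Matrix.mulVec_mulVec, ← pow_succ', hR, Matrix.zero_mulVec]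
      rw [hz, add_zero]
      refine Finset.sum_congr rfl fun j _ => ?_
      rw [Matrix.mulVec_mulVec, ← pow_succ', show k + 1 + j = k + (j + 1) by omega]
    rw [hz2 k (by omega), hz2 (k + 1) hk, Matrix.mulVec_neg, hsum,
      Finset.sum_range_succ']
    simp only [pow_zero, Matrix.one_mulVec, add_zero]
    abel
  -- every column of the data matrix lies in the range of L
  have colmem : ∀ kk : Fin T, Dᵀ kk ∈ LinearMap.range L := by
    intro kk
    refine ⟨Sum.elim (Sum.elim (z1d kk) (ud kk)) (Sum.elim (z2d ((kk : ℕ) + 1)) (etad kk)), ?_⟩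
    rw [hL, obsMap_apply]
    funext i
    rcases i with i | i
    · have h1 : R *ᵥ z2d ((kk : ℕ) + 1) - B2 *ᵥ ud kk - F2 *ᵥ etad kk = z2d kk :=
        (z2rec kk kk.isLt).symm
      rw [h1]
      have h2 := hxd kk (le_of_lt kk.isLt)
      simp [hD, histMat, Matrix.fromRows_apply_inl, h2, Function.comp_def]
    · rcases i with i | i
      · simp [hD, histMat]
      · rw [← hz1 kk kk.isLt, ← hxd ((kk : ℕ) + 1) kk.isLt, ← hyd ((kk : ℕ) + 1) kk.isLt]
        simp [hD, histMat, Function.comp_def]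
  -- the kernel of the big block matrix is trivial
  have hker : ∀ v : Fin (n1 + n2) ⊕ Fin q → ℝ,
      Matrix.fromBlocks E F C 0 *ᵥ v = 0 → v = 0 := by
    intro v hv
    by_contra hvne
    set xb : Fin (n1 + n2) → ℝ := v ∘ Sum.inl with hxbdef
    set etab : Fin q → ℝ := v ∘ Sum.inr with hetabdef
    have hv' : v = Sum.elim xb etab := by funext i; cases i <;> rfl
    rw [hv', Matrix.fromBlocks_mulVec] at hv
    have h1 : E *ᵥ xb + F *ᵥ etab = 0 := by
      funext i
      simpa using congrFun hv (Sum.inl i)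
    have h2 : C *ᵥ xb = 0 := by
      funext i
      simpa using congrFun hv (Sum.inr i)
    have hPd : IsUnit P.det := (Matrix.isUnit_iff_isUnit_det P).mp hP
    set w : Fin (n1 + n2) → ℝ := P⁻¹ *ᵥ xb with hwdef
    have hxw : P *ᵥ w = xb := by
      rw [hwdef, Matrix.mulVec_mulVec, Matrix.mul_nonsing_inv P hPd, Matrix.one_mulVec]
    have h1' : (S * E * P) *ᵥ w + (S * F) *ᵥ etab = 0 := by
      have hsv : S *ᵥ (E *ᵥ xb + F *ᵥ etab) = S *ᵥ 0 := by rw [h1]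
      rw [Matrix.mulVec_add, Matrix.mulVec_zero, ← hxw] at hsv
      simpa [Matrix.mulVec_mulVec, Matrix.mul_assoc] using hsv
    have hE' : S * E * P = (Matrix.fromBlocks (1 : Matrix (Fin n1) (Fin n1) ℝ) 0 0
        R).submatrix ⇑finSumFinEquiv.symm ⇑finSumFinEquiv.symm := by
      rw [← hE]; ext i j; simp [Matrix.submatrix_apply]
    have hF' : S * F = (Matrix.fromRows F1 F2).submatrix ⇑finSumFinEquiv.symm id := by
      rw [← hFdec]; ext i j; simp [Matrix.submatrix_apply]
    have hSEP : (S * E * P) *ᵥ w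
        = (Matrix.fromBlocks 1 0 0 R *ᵥ (w ∘ ⇑finSumFinEquiv)) ∘ ⇑finSumFinEquiv.symm := by
      rw [hE', Matrix.submatrix_mulVec_equiv]
      simp [Function.comp_def]
    have hSF : (S * F) *ᵥ etab = (Matrix.fromRows F1 F2 *ᵥ etab) ∘ ⇑finSumFinEquiv.symm := by
      rw [hF']
      rfl
    rw [hSEP, hSF] at h1'
    have h1'' : Matrix.fromBlocks 1 0 0 R *ᵥ (w ∘ ⇑finSumFinEquiv)
        + Matrix.fromRows F1 F2 *ᵥ etab = 0 := by
      funext j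
      have hj := congrFun h1' (finSumFinEquiv j)
      simpa [Function.comp_def] using hj
    rw [Matrix.fromBlocks_mulVec, Matrix.fromRows_mulVec] at h1''
    set z1b : Fin n1 → ℝ := (w ∘ ⇑finSumFinEquiv) ∘ Sum.inl with hz1bdef
    set z2b : Fin n2 → ℝ := (w ∘ ⇑finSumFinEquiv) ∘ Sum.inr with hz2bdef
    have ha : z1b + F1 *ᵥ etab = 0 := by
      funext i
      simpa [Matrix.one_mulVec, Matrix.zero_mulVec] using congrFun h1'' (Sum.inl i)
    have hb : R *ᵥ z2b + F2 *ᵥ etab = 0 := by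
      funext i
      simpa [Matrix.zero_mulVec] using congrFun h1'' (Sum.inr i)
    have hF1e : F1 *ᵥ etab = -z1b := eq_neg_of_add_eq_zero_right ha
    have hRz : R *ᵥ z2b = -(F2 *ᵥ etab) := eq_neg_of_add_eq_zero_left hb
    set θb : ((Fin n1 ⊕ Fin m) ⊕ (Fin n2 ⊕ Fin q)) → ℝ :=
      Sum.elim (Sum.elim (0 : Fin n1 → ℝ) (0 : Fin m → ℝ)) (Sum.elim (-z2b) etab) with hθbdef
    have hLθ : L θb = 0 := by
      rw [hθbdef, hL, obsMap_apply]
      have hx0 : (fun i => (Sum.elim (0 : Fin n1 → ℝ)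
          (R *ᵥ (-z2b) - B2 *ᵥ (0 : Fin m → ℝ) - F2 *ᵥ etab)) (finSumFinEquiv.symm i))
          = (0 : Fin (n1 + n2) → ℝ) := by
        funext j
        cases hsj : finSumFinEquiv.symm j with
        | inl i => simp [hsj]
        | inr i => simp [hsj, Matrix.mulVec_neg, hRz, Matrix.mulVec_zero]
      have hy0 : (fun i => (Sum.elim (A1 *ᵥ (0 : Fin n1 → ℝ) + B1 *ᵥ (0 : Fin m → ℝ)
          + F1 *ᵥ etab) (-z2b)) (finSumFinEquiv.symm i)) = -w := by
        funext j
        have hej : ∀ x, finSumFinEquiv.symm j = x → finSumFinEquiv x = j := by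
          intro x hx; rw [← hx]; simp
        cases hsj : finSumFinEquiv.symm j with
        | inl i =>
          have := hej _ hsj
          simp [hsj, Matrix.mulVec_zero, hF1e, hz1bdef, ← this]
        | inr i =>
          have := hej _ hsj
          simp [hsj, hz2bdef, ← this]
      rw [hx0, hy0]
      funext i
      rcases i with i | i | i
      · simp [Matrix.mulVec_zero]
      · rfl
      · simp [Matrix.mulVec_neg, hxw, h2]
    have hθne : θb ≠ 0 := by
      intro h0
      apply hvne
      have hetab0 : etab = 0 := by
        funext i
        simpa [hθbdef] using congrFun h0 (Sum.inr (Sum.inr i))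
      have hz2b0 : z2b = 0 := by
        funext i
        have := congrFun h0 (Sum.inr (Sum.inl i))
        simpa [hθbdef, neg_eq_zero] using this
      have hz1b0 : z1b = 0 := by
        simpa [hetab0, Matrix.mulVec_zero] using ha
      have hwe : (w ∘ ⇑finSumFinEquiv) = 0 := by
        funext x
        cases x with
        | inl i => exact congrFun hz1b0 i
        | inr i => exact congrFun hz2b0 i
      have hw0 : w = 0 := by
        funext j
        have := congrFun hwe (finSumFinEquiv.symm j)
        simpa [Function.comp_def] using this
      have hxb0 : xb = 0 := by rw [← hxw, hw0, Matrix.mulVec_zero]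
      rw [hv', hxb0, hetab0]
      funext i; cases i <;> rfl
    -- dimension count contradiction
    have hcol : Submodule.span ℝ (Set.range Dᵀ) ≤ LinearMap.range L :=
      Submodule.span_le.mpr (Set.range_subset_iff.mpr colmem)
    have hrankD : D.rank ≤ Module.finrank ℝ (LinearMap.range L) := by
      rw [Matrix.rank_eq_finrank_span_cols]
      exact Submodule.finrank_mono hcol
    have hrn := LinearMap.finrank_range_add_finrank_ker L
    have hdom : Module.finrank ℝ ((((Fin n1 ⊕ Fin m) ⊕ (Fin n2 ⊕ Fin q))) → ℝ)
        = (n1 + m) + (n2 + q) := by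
      simp [Module.finrank_pi]
    have hkpos : 0 < Module.finrank ℝ (LinearMap.ker L) := by
      have hmem : θb ∈ LinearMap.ker L := LinearMap.mem_ker.mpr hLθ
      have hne : (⟨θb, hmem⟩ : LinearMap.ker L) ≠ 0 := by
        simpa [Submodule.mk_eq_zero] using hθne
      exact Module.finrank_pos_iff_exists_ne_zero.mpr ⟨_, hne⟩
    rw [hdom] at hrn
    rw [hrk] at hrankD
    omega
  have hkerbot : LinearMap.ker (Matrix.fromBlocks E F C 0).mulVecLin = ⊥ := by
    refine LinearMap.ker_eq_bot'.mpr fun v hv => hker v ?_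
    simpa [Matrix.mulVecLin_apply] using hv
  have hrn := LinearMap.finrank_range_add_finrank_ker (Matrix.fromBlocks E F C 0).mulVecLin
  rw [hkerbot] at hrn
  have hdef : (Matrix.fromBlocks E F C 0).rank
      = Module.finrank ℝ (LinearMap.range (Matrix.fromBlocks E F C 0).mulVecLin) := rfl
  have hdom : Module.finrank ℝ ((Fin (n1 + n2) ⊕ Fin q) → ℝ) = (n1 + n2) + q := by
    simp [Module.finrank_pi]
  rw [hdom, finrank_bot, add_zero] at hrn
  rw [hdef, hrn]
end
end
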